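/- arXiv:2102.08278 — 9 statements merged into one kernel-verified Lean document; each statement's English description precedes it below -/
import Mathlib

section
/- Let p be a prime, let G₁, …, G_k be finite indecomposable groups, and let G = G₁ × ⋯ × G_k be their direct product, with each Gᵢ identified with the corresponding factor subgroup of G. Then for every automorphism α of G there exists a permutation σ of {1, …, k} such that α(Gᵢ·Z(G)) = G_{σ(i)}·Z(G) for each 1 ≤ i ≤ k, where Z(G) denotes the center of G. -/
/-- A finite group is *indecomposable* if it is not the (internal) direct product of two
proper subgroups; equivalently, whenever `A` and `B` are normal subgroups with
`A ⊓ B = ⊥` and `A ⊔ B = ⊤`, either `A = ⊤` or `B = ⊤`. -/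
def Indecomposable (H : Type*) [Group H] : Prop :=
  ∀ A B : Subgroup H, A.Normal → B.Normal → A ⊓ B = ⊥ → A ⊔ B = ⊤ → A = ⊤ ∨ B = ⊤

open Function

namespace KSaux

variable {N : Type*} [Group N]

lemma end_mul_apply (f g : Monoid.End N) (x : N) : (f * g) x = f (g x) := rfl

lemma pow_apply_add (φ : Monoid.End N) (a b : ℕ) (x : N) :
    (φ ^ (a + b)) x = (φ ^ a) ((φ ^ b) x) := by
  rw [pow_add]; rfl

/-- A normal endomorphism commutes with all inner automorphisms. -/
def IsNormalEndo (φ : Monoid.End N) : Prop :=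
  ∀ a x : N, φ (a * x * a⁻¹) = a * φ x * a⁻¹

theorem IsNormalEndo.pow {φ : Monoid.End N} (hφ : IsNormalEndo φ) (n : ℕ) :
    IsNormalEndo (φ ^ n) := by
  induction n with
  | zero => intro a x; simp
  | succ n ih =>
    intro a x
    rw [pow_succ, end_mul_apply, end_mul_apply, hφ a x, ih]

theorem fitting [Finite N] (hind : Indecomposable N) (φ : Monoid.End N)
    (hφ : IsNormalEndo φ) :
    (∃ n, ∀ x, (φ ^ n) x = 1) ∨ Function.Surjective φ := by
  have hmono : ∀ n, (φ ^ (n + 1)).range ≤ (φ ^ n).range := by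
    intro n
    rintro _ ⟨x, rfl⟩
    exact ⟨φ x, by show (φ ^ n) (φ x) = (φ ^ (n + 1)) x; rw [pow_apply_add φ n 1 x, pow_one]⟩
  have hstab : ∃ n, (φ ^ (n + 1)).range = (φ ^ n).range := by
    by_contra h
    push_neg at h
    have hSA : StrictAnti fun n => (φ ^ n).range :=
      strictAnti_nat_of_succ_lt fun n => lt_of_le_of_ne (hmono n) (h n)
    haveI : Finite (Subgroup N) := Finite.of_injective _ SetLike.coe_injective
    exact not_injective_infinite_finite _ hSA.injective
  obtain ⟨n, hstab⟩ := hstab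
  have hcomp : ∀ m : ℕ, (φ ^ (m + 1)).range = Subgroup.map φ (φ ^ m).range := by
    intro m
    ext y
    constructor
    · rintro ⟨v, rfl⟩
      refine ⟨(φ ^ m) v, ⟨v, rfl⟩, ?_⟩
      rw [show m + 1 = 1 + m from Nat.add_comm m 1]
      show φ ((φ ^ m) v) = (φ ^ (1 + m)) v
      rw [pow_apply_add φ 1 m v, pow_one]
    · rintro ⟨w, ⟨v, rfl⟩, rfl⟩
      refine ⟨v, ?_⟩
      rw [show m + 1 = 1 + m from Nat.add_comm m 1]
      show (φ ^ (1 + m)) v = φ ((φ ^ m) v)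
      rw [pow_apply_add φ 1 m v, pow_one]
  have hall : ∀ m, (φ ^ (n + m)).range = (φ ^ n).range := by
    intro m
    induction m with
    | zero => rfl
    | succ m ih =>
      rw [show n + (m + 1) = n + m + 1 from rfl, hcomp (n + m), ih, ← hcomp n, hstab]
  have hWnormal : (φ ^ n).range.Normal := by
    constructor
    rintro _ ⟨u, rfl⟩ g
    exact ⟨g * u * g⁻¹, hφ.pow n g u⟩
  have hesurj : ∀ w ∈ (φ ^ n).range, ∃ v ∈ (φ ^ n).range, (φ ^ n) v = w := by
    intro w hw
    rw [← hall n] at hw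
    obtain ⟨v, hv⟩ := hw
    refine ⟨(φ ^ n) v, ⟨v, rfl⟩, ?_⟩
    rw [← pow_apply_add φ n n v]
    exact hv
  have heinj : ∀ w ∈ (φ ^ n).range, (φ ^ n) w = 1 → w = 1 := by
    intro w hw hw1
    have hes : Function.Surjective
        (fun v : (φ ^ n).range => (⟨(φ ^ n) v, ⟨v, rfl⟩⟩ : (φ ^ n).range)) := by
      rintro ⟨w, hw⟩
      obtain ⟨v, hv, hv'⟩ := hesurj w hw
      exact ⟨⟨v, hv⟩, Subtype.ext hv'⟩
    have hei := Finite.injective_iff_surjective.mpr hes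
    have : (⟨(φ ^ n) w, ⟨w, rfl⟩⟩ : (φ ^ n).range) = ⟨(φ ^ n) 1, ⟨1, rfl⟩⟩ := by
      apply Subtype.ext
      simpa using hw1
    simpa using congrArg Subtype.val (hei (a₁ := ⟨w, hw⟩) (a₂ := ⟨1, one_mem _⟩) this)
  have hinf : (φ ^ n).ker ⊓ (φ ^ n).range = ⊥ := by
    rw [eq_bot_iff]
    rintro x ⟨hxK, hxW⟩
    exact heinj x hxW hxK
  have hsup : (φ ^ n).ker ⊔ (φ ^ n).range = ⊤ := by
    rw [eq_top_iff]
    intro g _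
    obtain ⟨w, hw, hw'⟩ := hesurj ((φ ^ n) g) ⟨g, rfl⟩
    have hk : g * w⁻¹ ∈ (φ ^ n).ker := by
      show (φ ^ n) (g * w⁻¹) = 1
      rw [map_mul, map_inv, hw', mul_inv_cancel]
    have : g = (g * w⁻¹) * w := by group
    rw [this]
    exact Subgroup.mul_mem _ (Subgroup.mem_sup_left hk) (Subgroup.mem_sup_right hw)
  rcases hind _ _ (MonoidHom.normal_ker _) hWnormal hinf hsup with hKtop | hWtop
  · left
    refine ⟨n, fun x => ?_⟩
    have : x ∈ (φ ^ n).ker := by rw [hKtop]; trivial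
    exact this
  · right
    intro y
    have : y ∈ (φ ^ n).range := by rw [hWtop]; trivial
    rw [← hstab] at this
    obtain ⟨u, hu⟩ := this
    refine ⟨(φ ^ n) u, ?_⟩
    rw [show (φ : N → N) ((φ ^ n) u) = (φ ^ (1 + n)) u from
      (by rw [pow_apply_add φ 1 n u, pow_one]), Nat.add_comm 1 n]
    exact hu

theorem sum_lemma [Finite N] (hind : Indecomposable N) (φ ψ η : Monoid.End N)
    (hη : IsNormalEndo η) (hψ : IsNormalEndo ψ) (hsurj : Function.Surjective (η : N → N))
    (hsum : ∀ x, η x = φ x * ψ x) :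
    Function.Surjective (φ : N → N) ∨ Function.Surjective (ψ : N → N) := by
  have hbij : Function.Bijective (η : N → N) := Finite.surjective_iff_bijective.mp hsurj
  let E : N ≃* N := MulEquiv.ofBijective (η : N →* N) hbij
  have hE : ∀ x, E x = η x := fun x => rfl
  have hEsymm : ∀ y, η (E.symm y) = y := fun y => E.apply_symm_apply y
  have hEsN : ∀ a x : N, E.symm (a * x * a⁻¹) = a * E.symm x * a⁻¹ := by
    intro a x
    apply E.injective
    rw [E.apply_symm_apply]
    rw [show E (a * E.symm x * a⁻¹) = η (a * E.symm x * a⁻¹) from rfl, hη, hEsymm]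
  set ψ' : Monoid.End N := (E.symm.toMonoidHom.comp (ψ : N →* N) : N →* N) with hψ'def
  set φ' : Monoid.End N := (E.symm.toMonoidHom.comp (φ : N →* N) : N →* N) with hφ'def
  have hψ'N : IsNormalEndo ψ' := by
    intro a x
    show E.symm (ψ (a * x * a⁻¹)) = _
    rw [hψ, hEsN]
    rfl
  have hid : ∀ x, φ' x * ψ' x = x := by
    intro x
    show E.symm (φ x) * E.symm (ψ x) = x
    rw [← map_mul, ← hsum]
    exact E.symm_apply_apply x
  rcases fitting hind ψ' hψ'N with ⟨b, hb⟩ | hs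
  · -- ψ' nilpotent : φ' is surjective via telescoping
    left
    have key : ∀ m x, ∃ y, x = φ' y * (ψ' ^ m) x := by
      intro m
      induction m with
      | zero => exact fun x => ⟨1, by simp⟩
      | succ m ih =>
        intro x
        obtain ⟨y, hy⟩ := ih x
        have h2 : (ψ' ^ m) x = φ' ((ψ' ^ m) x) * (ψ' ^ (m + 1)) x := by
          rw [pow_succ', end_mul_apply]
          exact (hid _).symm
        refine ⟨y * (ψ' ^ m) x, ?_⟩
        rw [map_mul, mul_assoc, ← h2]
        exact hy
    intro z
    obtain ⟨y, hy⟩ := key b (E.symm z)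
    rw [hb, mul_one] at hy
    exact ⟨y, E.symm.injective (show E.symm (φ y) = E.symm z from hy.symm)⟩
  · -- ψ' surjective, hence ψ surjective
    right
    intro z
    obtain ⟨y, hy⟩ := hs (E.symm z)
    exact ⟨y, by have : E.symm (ψ y) = E.symm z := hy; exact E.symm.injective this⟩

theorem main_L3 [Finite N] (hind : Indecomposable N) (hnt : Nontrivial N)
    {ι : Type*} [DecidableEq ι] (D : Finset ι → Monoid.End N)
    (hnorm : ∀ S, IsNormalEndo (D S))
    (hadd : ∀ S T, Disjoint S T → ∀ x, D (S ∪ T) x = D S x * D T x) :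
    ∀ S : Finset ι, Function.Surjective (D S : N → N) →
      ∃ j ∈ S, Function.Surjective (D {j} : N → N) := by
  intro S
  induction S using Finset.strongInduction with
  | _ S ih =>
    intro hS
    rcases S.eq_empty_or_nonempty with rfl | ⟨j, hj⟩
    · exfalso
      have h1 : ∀ x : N, D ∅ x = 1 := by
        intro x
        have h := hadd ∅ ∅ (Finset.disjoint_empty_left _) x
        rw [Finset.empty_union] at h
        have h' : D ∅ x * 1 = D ∅ x * D ∅ x := by rw [mul_one]; exact h
        exact (mul_left_cancel h').symm
      obtain ⟨g, hg⟩ := exists_ne (1 : N)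
      obtain ⟨x, hx⟩ := hS g
      exact hg (by rw [← hx, h1 x])
    · have hdisj : Disjoint ({j} : Finset ι) (S.erase j) :=
        Finset.disjoint_singleton_left.mpr (Finset.notMem_erase j S)
      have hsum : ∀ x, D S x = D {j} x * D (S.erase j) x := by
        intro x
        conv_lhs => rw [← Finset.insert_erase hj, Finset.insert_eq]
        exact hadd _ _ hdisj x
      rcases sum_lemma hind (D {j}) (D (S.erase j)) (D S) (hnorm S) (hnorm _) hS hsum with
        h | h
      · exact ⟨j, hj, h⟩
      · obtain ⟨j', hj', hs'⟩ := ih (S.erase j) (Finset.erase_ssubset hj) h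
        exact ⟨j', Finset.mem_of_mem_erase hj', hs'⟩



variable {k : ℕ} (G : Fin k → Type*) [∀ i, Group (G i)]

/-- Projection onto the coordinates in `S`. -/
def epsHom (S : Finset (Fin k)) : Monoid.End (∀ l, G l) where
  toFun x := fun l => if l ∈ S then x l else 1
  map_one' := by funext l; simp
  map_mul' x y := by funext l; by_cases h : l ∈ S <;> simp [h]

variable {G}

lemma epsHom_apply (S : Finset (Fin k)) (x : ∀ l, G l) (l : Fin k) :
    epsHom G S x l = if l ∈ S then x l else 1 := rfl

lemma epsHom_norm (S : Finset (Fin k)) (u v : ∀ l, G l) :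
    epsHom G S (u * v * u⁻¹) = u * epsHom G S v * u⁻¹ := by
  funext l
  rw [Pi.mul_apply, Pi.mul_apply, Pi.inv_apply, epsHom_apply, epsHom_apply]
  by_cases h : l ∈ S <;> simp [h]

lemma epsHom_add {S T : Finset (Fin k)} (hST : Disjoint S T) (x : ∀ l, G l) :
    epsHom G (S ∪ T) x = epsHom G S x * epsHom G T x := by
  funext l
  rw [Pi.mul_apply, epsHom_apply, epsHom_apply, epsHom_apply]
  by_cases hS : l ∈ S
  · have hT : l ∉ T := fun hT => (Finset.disjoint_left.mp hST hS) hT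
    simp [hS, hT]
  · by_cases hT : l ∈ T <;> simp [hS, hT]

lemma epsHom_univ (x : ∀ l, G l) : epsHom G Finset.univ x = x := by
  funext l; simp [epsHom_apply]

lemma epsHom_single (j : Fin k) (x : ∀ l, G l) :
    epsHom G {j} x = Pi.mulSingle j (x j) := by
  funext l
  rw [epsHom_apply]
  by_cases h : l = j
  · subst h; simp
  · simp [h, Pi.mulSingle_eq_of_ne h]


/-- The `(i,i)`-component, through the coordinates in `S`, of the automorphism `α`. -/
def dEnd (α : MulAut (∀ l, G l)) (i : Fin k) (S : Finset (Fin k)) : Monoid.End (G i) :=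
  ((Pi.evalMonoidHom G i).comp ((α.symm.toMonoidHom).comp
    ((epsHom G S : (∀ l, G l) →* (∀ l, G l)).comp
      (α.toMonoidHom.comp (MonoidHom.mulSingle G i)))) : G i →* G i)

lemma dEnd_apply (α : MulAut (∀ l, G l)) (i : Fin k) (S : Finset (Fin k)) (x : G i) :
    dEnd α i S x = (α.symm (epsHom G S (α (Pi.mulSingle i x)))) i := rfl

lemma dEnd_norm (α : MulAut (∀ l, G l)) (i : Fin k) (S : Finset (Fin k)) :
    IsNormalEndo (dEnd α i S) := by
  intro a x
  rw [dEnd_apply, dEnd_apply]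
  have e1 : Pi.mulSingle (M := G) i (a * x * a⁻¹)
      = Pi.mulSingle i a * Pi.mulSingle i x * (Pi.mulSingle i a)⁻¹ := by
    rw [show Pi.mulSingle (M := G) i = ⇑(MonoidHom.mulSingle G i) from rfl,
      map_mul, map_mul, map_inv]
  have e2 : α (Pi.mulSingle i (a * x * a⁻¹))
      = α (Pi.mulSingle i a) * α (Pi.mulSingle i x) * (α (Pi.mulSingle i a))⁻¹ := by
    rw [e1, map_mul, map_mul, map_inv]
  rw [e2, epsHom_norm, map_mul, map_mul, map_inv, MulEquiv.symm_apply_apply,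
    Pi.mul_apply, Pi.mul_apply, Pi.inv_apply, Pi.mulSingle_eq_same]

lemma dEnd_add (α : MulAut (∀ l, G l)) (i : Fin k) {S T : Finset (Fin k)}
    (hST : Disjoint S T) (x : G i) :
    dEnd α i (S ∪ T) x = dEnd α i S x * dEnd α i T x := by
  rw [dEnd_apply, dEnd_apply, dEnd_apply, epsHom_add hST, map_mul, Pi.mul_apply]

lemma dEnd_univ (α : MulAut (∀ l, G l)) (i : Fin k) (x : G i) :
    dEnd α i Finset.univ x = x := by
  rw [dEnd_apply, epsHom_univ, MulEquiv.symm_apply_apply, Pi.mulSingle_eq_same]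


end KSaux

open KSaux in
/-- If `G = G₁ × ⋯ × G_k` is a direct product of finite indecomposable
groups, then every automorphism `α` of `G` permutes the subgroups `Gᵢ·Z(G)`: there is a
permutation `σ` of the indices with `α(Gᵢ·Z(G)) = G_{σ(i)}·Z(G)` for each `i`. -/
theorem aut_permutes_factors_mod_center (p : ℕ) (hp : p.Prime)
    {k : ℕ} (G : Fin k → Type*) [∀ i, Group (G i)] [∀ i, Finite (G i)]
    (hind : ∀ i, Indecomposable (G i))
    (α : MulAut (∀ i, G i)) :
    ∃ σ : Equiv.Perm (Fin k), ∀ i : Fin k,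
      Subgroup.map α.toMonoidHom
          ((MonoidHom.mulSingle G i).range ⊔ Subgroup.center (∀ i, G i)) =
        (MonoidHom.mulSingle G (σ i)).range ⊔ Subgroup.center (∀ i, G i) := by
  classical
  set Z := Subgroup.center (∀ l, G l) with hZdef
  -- components of central elements are central, and conversely
  have hcent_apply : ∀ z : ∀ l, G l, z ∈ Z → ∀ (l) (c : G l), c * z l = z l * c := by
    intro z hz l c
    have h1 := (Subgroup.mem_center_iff.mp hz) (Pi.mulSingle l c)
    have h2 := congrFun h1 l
    rw [Pi.mul_apply, Pi.mul_apply, Pi.mulSingle_eq_same] at h2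
    exact h2
  have hcomp_center : ∀ z : ∀ l, G l, z ∈ Z → ∀ l, z l ∈ Subgroup.center (G l) := by
    intro z hz l
    rw [Subgroup.mem_center_iff]
    exact fun c => hcent_apply z hz l c
  have hcent_of : ∀ z : ∀ l, G l, (∀ l, z l ∈ Subgroup.center (G l)) → z ∈ Z := by
    intro z hz
    rw [Subgroup.mem_center_iff]
    intro g
    funext l
    rw [Pi.mul_apply, Pi.mul_apply]
    exact (Subgroup.mem_center_iff.mp (hz l)) (g l)
  -- the center is preserved by any automorphism
  have hZmem : ∀ (β : (∀ l, G l) ≃* (∀ l, G l)) (z), z ∈ Z → β z ∈ Z := by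
    intro β z hz
    rw [Subgroup.mem_center_iff] at hz ⊢
    intro g
    rw [← β.apply_symm_apply g, ← map_mul, hz (β.symm g), map_mul]
  have hZmap : ∀ β : (∀ l, G l) ≃* (∀ l, G l), Subgroup.map β.toMonoidHom Z = Z := by
    intro β
    apply le_antisymm
    · rintro _ ⟨z, hz, rfl⟩
      exact hZmem β z hz
    · intro z hz
      exact ⟨β.symm z, hZmem β.symm z hz, β.apply_symm_apply z⟩
  -- each factor subgroup is normal
  have hrangeNormal : ∀ l, ((MonoidHom.mulSingle G l).range).Normal := by
    intro l
    constructor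
    rintro _ ⟨y, rfl⟩ g
    refine ⟨g l * y * (g l)⁻¹, ?_⟩
    funext l'
    rw [show ((MonoidHom.mulSingle G l) (g l * y * (g l)⁻¹)) l'
        = Pi.mulSingle l (g l * y * (g l)⁻¹) l' from rfl]
    rw [Pi.mul_apply, Pi.mul_apply, Pi.inv_apply,
      show ((MonoidHom.mulSingle G l) y) l' = Pi.mulSingle l y l' from rfl]
    by_cases h : l' = l
    · subst h
      rw [Pi.mulSingle_eq_same, Pi.mulSingle_eq_same]
    · rw [Pi.mulSingle_eq_of_ne h, Pi.mulSingle_eq_of_ne h, mul_one, mul_inv_cancel]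
  -- central factors
  have hcent_top : ∀ l, Subgroup.center (G l) = ⊤ ↔ (MonoidHom.mulSingle G l).range ≤ Z := by
    intro l
    constructor
    · intro h
      rintro _ ⟨y, rfl⟩
      apply hcent_of
      intro l'
      by_cases hl : l' = l
      · subst hl
        rw [show ((MonoidHom.mulSingle G l') y) l' = y from Pi.mulSingle_eq_same l' y, h]
        trivial
      · rw [show ((MonoidHom.mulSingle G l) y) l' = 1 from Pi.mulSingle_eq_of_ne hl y]
        exact one_mem _
    · intro h
      rw [Subgroup.eq_top_iff']
      intro y
      rw [Subgroup.mem_center_iff]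
      intro c
      have h2 := hcent_apply _ (h ⟨y, rfl⟩) l c
      rw [show ((MonoidHom.mulSingle G l) y) l = y from Pi.mulSingle_eq_same l y] at h2
      exact h2
  -- the decomposition helper
  have helper : ∀ (β : (∀ l, G l) ≃* (∀ l, G l)) (i j : Fin k),
      (∀ x : G i, (β (Pi.mulSingle i x)) j = 1 → x = 1) →
      ∀ x : G i, β (Pi.mulSingle i x) ∈ (MonoidHom.mulSingle G j).range ⊔ Z := by
    intro β i j hinj x
    have hHnorm : (Subgroup.map β.toMonoidHom (MonoidHom.mulSingle G i).range).Normal :=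
      Subgroup.Normal.map (hrangeNormal i) β.toMonoidHom (MulEquiv.surjective β)
    have hKnorm : ((Pi.evalMonoidHom G j).ker).Normal := MonoidHom.normal_ker _
    have hdisj : Disjoint (Subgroup.map β.toMonoidHom (MonoidHom.mulSingle G i).range)
        ((Pi.evalMonoidHom G j).ker) := by
      rw [Subgroup.disjoint_def]
      rintro v ⟨_, ⟨x', rfl⟩, rfl⟩ hv2
      rw [MonoidHom.mem_ker] at hv2
      have hx1 : x' = 1 := hinj x' hv2
      subst hx1
      rw [map_one, map_one]
    have hcomm : ∀ (l), l ≠ j → ∀ y : G l,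
        β (Pi.mulSingle i x) l * y = y * β (Pi.mulSingle i x) l := by
      intro l hl y
      have h2 : Pi.mulSingle l y ∈ (Pi.evalMonoidHom G j).ker := by
        rw [MonoidHom.mem_ker]
        exact Pi.mulSingle_eq_of_ne (Ne.symm hl) y
      have h1 : β (Pi.mulSingle i x)
          ∈ Subgroup.map β.toMonoidHom (MonoidHom.mulSingle G i).range :=
        ⟨Pi.mulSingle i x, ⟨x, rfl⟩, rfl⟩
      have hcom := Subgroup.commute_of_normal_of_disjoint _ _ hHnorm hKnorm hdisj
        _ _ h1 h2
      have h3 := congrFun hcom l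
      rw [Pi.mul_apply, Pi.mul_apply, Pi.mulSingle_eq_same] at h3
      exact h3
    have hu : β (Pi.mulSingle i x)
        = Pi.mulSingle j ((β (Pi.mulSingle i x)) j)
          * fun l => if l = j then 1 else (β (Pi.mulSingle i x)) l := by
      funext l
      rw [Pi.mul_apply]
      by_cases h : l = j
      · subst h
        rw [Pi.mulSingle_eq_same, if_pos rfl, mul_one]
      · rw [Pi.mulSingle_eq_of_ne h, if_neg h, one_mul]
    rw [hu]
    apply Subgroup.mul_mem
    · exact Subgroup.mem_sup_left ⟨(β (Pi.mulSingle i x)) j, rfl⟩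
    · apply Subgroup.mem_sup_right
      apply hcent_of
      intro l
      by_cases h : l = j
      · subst h
        rw [if_pos rfl]
        exact one_mem _
      · rw [if_neg h]
        rw [Subgroup.mem_center_iff]
        exact fun c => (hcomm l h c).symm
  -- the main step
  have main : ∀ i : Fin k, Subgroup.center (G i) ≠ ⊤ →
      ∃ j : Fin k, Subgroup.center (G j) ≠ ⊤ ∧
        Subgroup.map α.toMonoidHom ((MonoidHom.mulSingle G i).range ⊔ Z)
          = (MonoidHom.mulSingle G j).range ⊔ Z := by
    intro i hiT
    have hnt : Nontrivial (G i) := by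
      by_contra h
      rw [not_nontrivial_iff_subsingleton] at h
      refine hiT ?_
      rw [Subgroup.eq_top_iff']
      intro x
      rw [Subgroup.mem_center_iff]
      intro g
      exact Subsingleton.elim _ _
    obtain ⟨j, -, hjsurj⟩ := main_L3 (hind i) hnt (dEnd α i) (dEnd_norm α i)
      (fun S T hST x => dEnd_add α i hST x) Finset.univ
      (fun y => ⟨y, dEnd_univ α i y⟩)
    set f : G i →* G j :=
      (Pi.evalMonoidHom G j).comp (α.toMonoidHom.comp (MonoidHom.mulSingle G i)) with hfdef
    set g : G j →* G i :=
      (Pi.evalMonoidHom G i).comp (α.symm.toMonoidHom.comp (MonoidHom.mulSingle G j)) with hgdef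
    have hfg : ∀ x : G i, dEnd α i {j} x = g (f x) := by
      intro x
      rw [dEnd_apply, epsHom_single]
      rfl
    have hgf_surj : Function.Surjective fun x => g (f x) := by
      intro y
      obtain ⟨x, hx⟩ := hjsurj y
      exact ⟨x, by show g (f x) = y; rw [← hfg]; exact hx⟩
    have hgf_inj : Function.Injective fun x => g (f x) :=
      Finite.injective_iff_surjective.mpr hgf_surj
    have hf_inj : Function.Injective ⇑f := by
      intro a b hab
      exact hgf_inj (show g (f a) = g (f b) by rw [hab])
    set F : Monoid.End (G j) := (f.comp g : G j →* G j) with hFdef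
    have hF_apply : ∀ y : G j, F y
        = (α (epsHom G {i} (α.symm (Pi.mulSingle j y)))) j := by
      intro y
      rw [epsHom_single]
      rfl
    have hF_eq : ∀ y : G j, F y = f (g y) := fun y => rfl
    have hFnorm : IsNormalEndo F := by
      intro a y
      rw [hF_apply, hF_apply]
      have e1 : Pi.mulSingle (M := G) j (a * y * a⁻¹)
          = Pi.mulSingle j a * Pi.mulSingle j y * (Pi.mulSingle j a)⁻¹ := by
        rw [show Pi.mulSingle (M := G) j = ⇑(MonoidHom.mulSingle G j) from rfl,
          map_mul, map_mul, map_inv]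
      have e2 : α.symm (Pi.mulSingle j (a * y * a⁻¹))
          = α.symm (Pi.mulSingle j a) * α.symm (Pi.mulSingle j y)
            * (α.symm (Pi.mulSingle j a))⁻¹ := by
        rw [e1, map_mul, map_mul, map_inv]
      rw [e2, epsHom_norm, map_mul, map_mul, map_inv, MulEquiv.apply_symm_apply,
        Pi.mul_apply, Pi.mul_apply, Pi.inv_apply, Pi.mulSingle_eq_same]
    have hg_inj : Function.Injective ⇑g := by
      rcases fitting (hind j) F hFnorm with ⟨b, hb⟩ | hFsurj
      · exfalso
        have claim : ∀ m (x : G i),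
            g ((F ^ m) (f x)) = 1 → x = 1 := by
          intro m
          induction m with
          | zero =>
            intro x hx
            rw [pow_zero] at hx
            have hx' : g (f x) = 1 := hx
            exact hgf_inj (show g (f x) = g (f 1) by rw [map_one, map_one]; exact hx')
          | succ m ih =>
            intro x hx
            rw [pow_succ, end_mul_apply] at hx
            have hx' : g ((F ^ m) (f (g (f x)))) = 1 := hx
            have h5 := ih (g (f x)) hx'
            exact hgf_inj (show g (f x) = g (f 1) by rw [map_one, map_one]; exact h5)
        have hall1 : ∀ x : G i, x = 1 := by
          intro x
          refine claim b x ?_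
          rw [hb (f x)]
          exact map_one g
        obtain ⟨u, v, huv⟩ := hnt
        exact huv (by rw [hall1 u, hall1 v])
      · have hF_inj : Function.Injective ⇑F :=
          Finite.injective_iff_surjective.mpr hFsurj
        intro a b hab
        exact hF_inj (show F a = F b by rw [hF_eq, hF_eq, hab])
    have hQ : Subgroup.map α.toMonoidHom ((MonoidHom.mulSingle G i).range ⊔ Z)
        = (MonoidHom.mulSingle G j).range ⊔ Z := by
      apply le_antisymm
      · rw [Subgroup.map_sup, hZmap α]
        apply sup_le _ le_sup_right
        rintro _ ⟨_, ⟨x, rfl⟩, rfl⟩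
        exact helper α i j
          (fun x' hx' => hf_inj (show f x' = f 1 by rw [map_one]; exact hx')) x
      · apply sup_le
        · rintro _ ⟨y, rfl⟩
          have hmem := helper α.symm j i
            (fun y' hy' => hg_inj (show g y' = g 1 by rw [map_one]; exact hy')) y
          exact ⟨α.symm (Pi.mulSingle j y), hmem, α.apply_symm_apply _⟩
        · intro z hz
          have h6 : α.symm z ∈ Z := hZmem α.symm z hz
          exact ⟨α.symm z, Subgroup.mem_sup_right h6, α.apply_symm_apply z⟩
    refine ⟨j, ?_, hQ⟩
    intro hj
    have h1 : (MonoidHom.mulSingle G j).range ≤ Z := (hcent_top j).mp hj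
    have h2 : (MonoidHom.mulSingle G j).range ⊔ Z = Z := sup_eq_right.mpr h1
    have h3 : (MonoidHom.mulSingle G i).range ⊔ Z = Z := by
      apply Subgroup.map_injective (f := α.toMonoidHom) (MulEquiv.injective α)
      rw [hQ, hZmap α, h2]
    exact hiT ((hcent_top i).mpr (le_trans le_sup_left (le_of_eq h3)))
  choose jj hjnc hjQ using main
  let s : Fin k → Fin k := fun i =>
    if h : Subgroup.center (G i) = ⊤ then i else jj i h
  have hdistinct : ∀ a b : Fin k, a ≠ b →
      (MonoidHom.mulSingle G a).range ⊔ Z = (MonoidHom.mulSingle G b).range ⊔ Z →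
      Subgroup.center (G a) = ⊤ := by
    intro a b hab heq
    rw [Subgroup.eq_top_iff']
    intro x
    have hx : Pi.mulSingle a x ∈ (MonoidHom.mulSingle G b).range ⊔ Z := by
      rw [← heq]
      exact Subgroup.mem_sup_left ⟨x, rfl⟩
    rw [← SetLike.mem_coe, Subgroup.mul_normal] at hx
    obtain ⟨w, hw, z, hz, hwz⟩ := hx
    obtain ⟨y, rfl⟩ := hw
    have hwz' : (MonoidHom.mulSingle G b) y * z = Pi.mulSingle a x := hwz
    have ha := congrFun hwz' a
    rw [Pi.mul_apply, Pi.mulSingle_eq_same,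
      show ((MonoidHom.mulSingle G b) y) a = 1 from Pi.mulSingle_eq_of_ne hab y,
      one_mul] at ha
    rw [← ha]
    exact hcomp_center z hz a
  have hs_inj : Function.Injective s := by
    intro a b hab
    by_cases ha : Subgroup.center (G a) = ⊤ <;> by_cases hb : Subgroup.center (G b) = ⊤
    · rwa [show s a = a from dif_pos ha, show s b = b from dif_pos hb] at hab
    · exfalso
      rw [show s a = a from dif_pos ha, show s b = jj b hb from dif_neg hb] at hab
      exact (hjnc b hb) (by rw [← hab]; exact ha)
    · exfalso
      rw [show s a = jj a ha from dif_neg ha, show s b = b from dif_pos hb] at hab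
      exact (hjnc a ha) (by rw [hab]; exact hb)
    · rw [show s a = jj a ha from dif_neg ha, show s b = jj b hb from dif_neg hb] at hab
      by_contra hne
      have h1 : Subgroup.map α.toMonoidHom ((MonoidHom.mulSingle G a).range ⊔ Z)
          = Subgroup.map α.toMonoidHom ((MonoidHom.mulSingle G b).range ⊔ Z) := by
        rw [hjQ a ha, hjQ b hb, hab]
      have h2 := Subgroup.map_injective (f := α.toMonoidHom) (MulEquiv.injective α) h1
      exact ha (hdistinct a b hne h2)
  refine ⟨Equiv.ofBijective s (Finite.injective_iff_bijective.mp hs_inj), ?_⟩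
  intro i
  show Subgroup.map α.toMonoidHom ((MonoidHom.mulSingle G i).range ⊔ Z)
      = (MonoidHom.mulSingle G (s i)).range ⊔ Z
  by_cases h : Subgroup.center (G i) = ⊤
  · rw [show s i = i from dif_pos h]
    have h1 : (MonoidHom.mulSingle G i).range ⊔ Z = Z :=
      sup_eq_right.mpr ((hcent_top i).mp h)
    rw [h1, hZmap α]
  · rw [show s i = jj i h from dif_neg h]
    exact hjQ i h
end

section
/- Let G₁, …, G_k be finite indecomposable groups and let G = G₁ × ⋯ × G_k be their direct product, with each Gᵢ identified with the corresponding factor subgroup of G. Assume that gcd(|Z(G)|, |G/[G,G]|) = 1, where Z(G) is the center of G and [G,G] its commutator subgroup. Then for every automorphism α of G there exists a permutation σ of {1, …, k} such that α(Gᵢ) = G_{σ(i)} for each 1 ≤ i ≤ k. -/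
section Aux

open scoped commutatorElement IsMulCommutative

/-- Indecomposability transfers along a `MulEquiv`. -/
lemma indecomposable_of_mulEquiv {H K : Type*} [Group H] [Group K] (e : H ≃* K)
    (h : Indecomposable H) : Indecomposable K := by
  intro A B hA hB hinf hsup
  have hAn : (A.map e.symm.toMonoidHom).Normal := Subgroup.Normal.map hA _ e.symm.surjective
  have hBn : (B.map e.symm.toMonoidHom).Normal := Subgroup.Normal.map hB _ e.symm.surjective
  have hinf' : A.map e.symm.toMonoidHom ⊓ B.map e.symm.toMonoidHom = ⊥ := by
    rw [← Subgroup.map_inf A B _ e.symm.injective, hinf, Subgroup.map_bot]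
  have hsup' : A.map e.symm.toMonoidHom ⊔ B.map e.symm.toMonoidHom = ⊤ := by
    rw [← Subgroup.map_sup, hsup, Subgroup.map_top_of_surjective _ e.symm.surjective]
  have htop : ∀ C : Subgroup K, C.map e.symm.toMonoidHom = ⊤ → C = ⊤ := by
    intro C hC
    rw [eq_top_iff]
    intro b _
    have : e.symm b ∈ C.map e.symm.toMonoidHom := by rw [hC]; trivial
    obtain ⟨a, ha, hab⟩ := this
    have : a = b := e.symm.injective hab
    rwa [← this]
  rcases h _ _ hAn hBn hinf' hsup' with h1 | h1
  · exact Or.inl (htop _ h1)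
  · exact Or.inr (htop _ h1)

variable {k : ℕ} (G : Fin k → Type*) [∀ i, Group (G i)]

/-- Keep only coordinate `i`. -/
def keepHom (i : Fin k) : (∀ i, G i) →* (∀ i, G i) :=
  (MonoidHom.mulSingle G i).comp (Pi.evalMonoidHom G i)

/-- Kill coordinate `i`. -/
def killHom (i : Fin k) : (∀ i, G i) →* (∀ i, G i) :=
  MonoidHom.mk' (fun x j => if j = i then 1 else x j)
    (by intro a b; funext j; by_cases h : j = i <;> simp [h])

variable {G}

lemma keepHom_apply (i : Fin k) (x : ∀ i, G i) : keepHom G i x = Pi.mulSingle i (x i) := rfl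

lemma killHom_apply (i j : Fin k) (x : ∀ i, G i) :
    killHom G i x j = if j = i then 1 else x j := rfl

lemma keep_mul_kill (i : Fin k) (x : ∀ i, G i) : keepHom G i x * killHom G i x = x := by
  funext j
  by_cases h : j = i
  · subst h; simp [keepHom_apply, killHom_apply]
  · simp [keepHom_apply, killHom_apply, h, Pi.mulSingle_eq_of_ne h]

lemma mem_range_mulSingle_iff {i : Fin k} {y : ∀ i, G i} :
    y ∈ (MonoidHom.mulSingle G i).range ↔ ∀ j, j ≠ i → y j = 1 := by
  constructor
  · rintro ⟨x, rfl⟩ j hj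
    exact Pi.mulSingle_eq_of_ne hj x
  · intro h
    refine ⟨y i, ?_⟩
    funext j
    by_cases hj : j = i
    · subst hj; simp
    · rw [h j hj]; exact Pi.mulSingle_eq_of_ne hj (y i)

lemma killHom_eq_one_iff (i : Fin k) (x : ∀ i, G i) :
    killHom G i x = 1 ↔ x ∈ (MonoidHom.mulSingle G i).range := by
  rw [mem_range_mulSingle_iff]
  constructor
  · intro h j hj
    have := congrFun h j
    simpa [killHom_apply, hj] using this
  · intro h
    funext j
    by_cases hj : j = i
    · simp [killHom_apply, hj]
    · simp [killHom_apply, hj, h j hj]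

lemma killHom_idem (i : Fin k) (x : ∀ i, G i) : killHom G i (killHom G i x) = killHom G i x := by
  funext j
  by_cases hj : j = i <;> simp [killHom_apply, hj]

lemma keepHom_of_mem {i : Fin k} {x : ∀ i, G i} (hx : x ∈ (MonoidHom.mulSingle G i).range) :
    keepHom G i x = x := by
  rw [mem_range_mulSingle_iff] at hx
  funext j
  by_cases hj : j = i
  · subst hj; simp [keepHom_apply]
  · rw [keepHom_apply, Pi.mulSingle_eq_of_ne hj, hx j hj]

lemma commute_of_single_of_killed {i : Fin k} {a b : ∀ i, G i}
    (ha : a ∈ (MonoidHom.mulSingle G i).range) (hb : b i = 1) : Commute a b := by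
  rw [mem_range_mulSingle_iff] at ha
  funext j
  by_cases hj : j = i
  · subst hj; simp [Pi.mul_apply, hb]
  · simp [Pi.mul_apply, ha j hj]

lemma range_mulSingle_normal (i : Fin k) : ((MonoidHom.mulSingle G i).range).Normal := by
  constructor
  intro n hn g
  rw [mem_range_mulSingle_iff] at hn ⊢
  intro j hj
  simp [Pi.mul_apply, hn j hj]

lemma single_commutator_eq (j : Fin k) (n h : ∀ i, G i) :
    ⁅Pi.mulSingle j (n j), h⁆ = ⁅n, Pi.mulSingle j (h j)⁆ := by
  funext l
  by_cases hl : l = j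
  · subst hl
    simp [commutatorElement_def, Pi.mul_apply, Pi.inv_apply, mul_assoc]
  · simp [commutatorElement_def, Pi.mul_apply, Pi.inv_apply,
      Pi.mulSingle_eq_of_ne hl]

/-- Every homomorphism of a finite group into its center is trivial when the center and
abelianization have coprime orders. -/
lemma hom_to_center_trivial {H : Type*} [Group H] [Finite H]
    (hcop : Nat.Coprime (Nat.card ↥(Subgroup.center H)) (Nat.card (Abelianization H)))
    (f : H →* H) (hf : ∀ g, f g ∈ Subgroup.center H) (g : H) : f g = 1 := by
  let f₀ : H →* ↥(Subgroup.center H) := f.codRestrict _ hf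
  let f₁ : Abelianization H →* ↥(Subgroup.center H) := Abelianization.lift f₀
  have h1 : Nat.card f₁.range ∣ Nat.card (Abelianization H) := by
    have := Nat.card_congr (QuotientGroup.quotientKerEquivRange f₁).toEquiv
    rw [← this]
    exact Subgroup.card_quotient_dvd_card _
  have h2 : Nat.card f₁.range ∣ Nat.card ↥(Subgroup.center H) :=
    Subgroup.card_subgroup_dvd_card _
  have h3 : Nat.card f₁.range ∣ 1 := hcop ▸ Nat.dvd_gcd h2 h1
  have h4 : f₁.range = ⊥ := Subgroup.card_eq_one.mp (Nat.eq_one_of_dvd_one h3)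
  have h5 : f₁ (Abelianization.of g) = 1 := by
    have : f₁ (Abelianization.of g) ∈ f₁.range := ⟨_, rfl⟩
    rw [h4] at this
    exact this
  have h6 : f₀ g = 1 := by
    have : f₁ (Abelianization.of g) = f₀ g := Abelianization.lift_apply_of f₀ g
    rw [← this, h5]
  have : (f₀ g : H) = f g := rfl
  rw [← this, h6]
  rfl

end Aux

section Main

open scoped commutatorElement

variable {k : ℕ} {G : Fin k → Type*} [∀ i, Group (G i)] [∀ i, Finite (G i)]

/-- Step 1: each coordinate projection of an element of `α(Gᵢ)` stays in `α(Gᵢ)`. -/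
lemma step1
    (hcop : Nat.Coprime (Nat.card ↥(Subgroup.center (∀ i, G i)))
      (Nat.card (Abelianization (∀ i, G i))))
    (α : MulAut (∀ i, G i)) (i j : Fin k) :
    ∀ n ∈ Subgroup.map α.toMonoidHom (MonoidHom.mulSingle G i).range,
      Pi.mulSingle j (n j) ∈ Subgroup.map α.toMonoidHom (MonoidHom.mulSingle G i).range := by
  classical
  set R : Fin k → Subgroup (∀ i, G i) := fun m => (MonoidHom.mulSingle G m).range with hR
  set N : Subgroup (∀ i, G i) := Subgroup.map α.toMonoidHom (R i) with hN
  have hNnormal : N.Normal := Subgroup.Normal.map (range_mulSingle_normal i) _ α.surjective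
  set p : (∀ i, G i) →* (∀ i, G i) :=
    α.toMonoidHom.comp ((keepHom G i).comp α.symm.toMonoidHom) with hp
  set q : (∀ i, G i) →* (∀ i, G i) :=
    α.toMonoidHom.comp ((killHom G i).comp α.symm.toMonoidHom) with hq
  have hpq : ∀ x, p x * q x = x := by
    intro x
    show α (keepHom G i (α.symm x)) * α (killHom G i (α.symm x)) = x
    rw [← map_mul, keep_mul_kill, MulEquiv.apply_symm_apply]
  have hq_one : ∀ x, q x = 1 ↔ x ∈ N := by
    intro x
    show α (killHom G i (α.symm x)) = 1 ↔ _
    rw [map_eq_one_iff _ α.injective, killHom_eq_one_iff, hN, Subgroup.mem_map_equiv]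
  have hp_mem : ∀ x, p x ∈ N := by
    intro x
    exact ⟨keepHom G i (α.symm x), ⟨α.symm x i, rfl⟩, rfl⟩
  have hq_coord : ∀ x, killHom G i (α.symm x) i = 1 := by
    intro x; simp [killHom_apply]
  have hcomm_qp : ∀ x h, Commute (q x) (p h) := by
    intro x h
    have h1 : Commute (keepHom G i (α.symm h)) (killHom G i (α.symm x)) :=
      commute_of_single_of_killed ⟨α.symm h i, rfl⟩ (by simp [killHom_apply])
    exact (h1.map α.toMonoidHom).symm
  -- the key central-valued homomorphism
  set f : (∀ i, G i) →* (∀ i, G i) := q.comp ((keepHom G j).comp p) with hf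
  have hcentral : ∀ g, f g ∈ Subgroup.center (∀ i, G i) := by
    intro g
    set n : ∀ i, G i := p g with hn
    have hnN : n ∈ N := hp_mem g
    set x : ∀ i, G i := Pi.mulSingle j (n j) with hx
    have hfx : f g = q x := rfl
    rw [Subgroup.mem_center_iff]
    intro h
    have hcomm2 : Commute (q x) (q h) := by
      have hcin : ⁅x, h⁆ ∈ N := by
        rw [hx, single_commutator_eq]
        have : ⁅n, Pi.mulSingle j (h j)⁆ =
            n * (Pi.mulSingle j (h j) * n⁻¹ * (Pi.mulSingle j (h j))⁻¹) := by
          rw [commutatorElement_def]; group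
        rw [this]
        exact mul_mem hnN (hNnormal.conj_mem _ (inv_mem hnN) _)
      have : q ⁅x, h⁆ = 1 := (hq_one _).mpr hcin
      rw [map_commutatorElement] at this
      exact commutatorElement_eq_one_iff_commute.mp this
    have hdecomp : h = p h * q h := (hpq h).symm
    have : Commute (q x) h := by
      rw [hdecomp]; exact (hcomm_qp x h).mul_right hcomm2
    rw [hfx]
    exact this.symm.eq
  have hftriv : ∀ g, f g = 1 := fun g => hom_to_center_trivial hcop f hcentral g
  -- conclude
  intro n hn
  have hpn : p n = n := by
    show α (keepHom G i (α.symm n)) = n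
    have : α.symm n ∈ R i := by
      rw [hN, Subgroup.mem_map_equiv] at hn
      exact hn
    rw [keepHom_of_mem this, MulEquiv.apply_symm_apply]
  have : f n = 1 := hftriv n
  have hq1 : q (Pi.mulSingle j (n j)) = 1 := by
    have : q (keepHom G j (p n)) = 1 := hftriv n
    rwa [hpn, keepHom_apply] at this
  exact (hq_one _).mp hq1

/-- Step 2: dichotomy for an indecomposable "coordinate-closed" normal subgroup. -/
lemma step2 (N : Subgroup (∀ i, G i)) (hNind : Indecomposable ↥N) (hNnormal : N.Normal)
    (hcl : ∀ n ∈ N, ∀ j, Pi.mulSingle j (n j) ∈ N) :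
    N = ⊥ ∨ ∃ j, N ≤ (MonoidHom.mulSingle G j).range := by
  classical
  by_cases hbot : N = ⊥
  · exact Or.inl hbot
  right
  obtain ⟨n₀, hn₀N, hn₀⟩ : ∃ n₀ ∈ N, n₀ ≠ 1 := by
    by_contra hcon
    push_neg at hcon
    exact hbot (Subgroup.eq_bot_iff_forall N |>.mpr hcon)
  obtain ⟨j₀, hj₀⟩ : ∃ j₀, n₀ j₀ ≠ 1 := by
    by_contra hcon
    push_neg at hcon
    exact hn₀ (funext hcon)
  refine ⟨j₀, ?_⟩
  set R : Subgroup (∀ i, G i) := (MonoidHom.mulSingle G j₀).range with hRdef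
  set K : Subgroup (∀ i, G i) := (Pi.evalMonoidHom G j₀).ker with hKdef
  have hmemK : ∀ x : ∀ i, G i, x ∈ K ↔ x j₀ = 1 := fun x => Iff.rfl
  set A : Subgroup ↥N := R.subgroupOf N with hA
  set B : Subgroup ↥N := K.subgroupOf N with hB
  have hAn : A.Normal := (range_mulSingle_normal j₀).subgroupOf N
  have hBn : B.Normal := (MonoidHom.normal_ker _).subgroupOf N
  have hinf : A ⊓ B = ⊥ := by
    rw [eq_bot_iff]
    rintro ⟨x, hxN⟩ ⟨hxA, hxB⟩
    have hxR : x ∈ R := hxA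
    have hxK : x j₀ = 1 := hxB
    have : x = 1 := by
      rw [mem_range_mulSingle_iff] at hxR
      funext l
      by_cases hl : l = j₀
      · subst hl; exact hxK
      · exact hxR l hl
    exact Subtype.ext this
  have hsup : A ⊔ B = ⊤ := by
    rw [eq_top_iff]
    rintro ⟨x, hxN⟩ _
    have h1 : Pi.mulSingle j₀ (x j₀) ∈ N := hcl x hxN j₀
    have h2 : (Pi.mulSingle j₀ (x j₀))⁻¹ * x ∈ N := mul_mem (inv_mem h1) hxN
    have hmA : (⟨Pi.mulSingle j₀ (x j₀), h1⟩ : ↥N) ∈ A := by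
      show Pi.mulSingle j₀ (x j₀) ∈ R
      exact ⟨x j₀, rfl⟩
    have hmB : (⟨(Pi.mulSingle j₀ (x j₀))⁻¹ * x, h2⟩ : ↥N) ∈ B := by
      show ((Pi.mulSingle j₀ (x j₀))⁻¹ * x) j₀ = 1
      simp [Pi.mul_apply]
    have : (⟨x, hxN⟩ : ↥N) = ⟨Pi.mulSingle j₀ (x j₀), h1⟩ * ⟨(Pi.mulSingle j₀ (x j₀))⁻¹ * x, h2⟩ := by
      ext; simp
    rw [this]
    exact Subgroup.mul_mem_sup hmA hmB
  rcases hNind A B hAn hBn hinf hsup with htop | htop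
  · rwa [hA, Subgroup.subgroupOf_eq_top] at htop
  · exfalso
    rw [hB, Subgroup.subgroupOf_eq_top] at htop
    exact hj₀ (htop hn₀N)

end Main

/-- If `G = G₁ × ⋯ × G_k` is a direct product of finite indecomposable
groups and `gcd(|Z(G)|, |G/[G,G]|) = 1`, then every automorphism `α` of `G` permutes the
factor subgroups: there is a permutation `σ` with `α(Gᵢ) = G_{σ(i)}` for each `i`. -/
theorem aut_permutes_factors
    {k : ℕ} (G : Fin k → Type*) [∀ i, Group (G i)] [∀ i, Finite (G i)]
    (hind : ∀ i, Indecomposable (G i))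
    (hcop : Nat.Coprime (Nat.card ↥(Subgroup.center (∀ i, G i)))
      (Nat.card (Abelianization (∀ i, G i))))
    (α : MulAut (∀ i, G i)) :
    ∃ σ : Equiv.Perm (Fin k), ∀ i : Fin k,
      Subgroup.map α.toMonoidHom (MonoidHom.mulSingle G i).range =
        (MonoidHom.mulSingle G (σ i)).range := by
  classical
  set R : Fin k → Subgroup (∀ i, G i) := fun m => (MonoidHom.mulSingle G m).range with hR
  set N : Fin k → Subgroup (∀ i, G i) := fun m => Subgroup.map α.toMonoidHom (R m) with hNdef
  -- indecomposability of the subgroups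
  have hRind : ∀ i, Indecomposable ↥(R i) :=
    fun i => indecomposable_of_mulEquiv
      (MonoidHom.ofInjective (Pi.mulSingle_injective i : Function.Injective _)) (hind i)
  have hNind : ∀ i, Indecomposable ↥(N i) :=
    fun i => indecomposable_of_mulEquiv (α.subgroupMap (R i)) (hRind i)
  have hRnormal : ∀ i, (R i).Normal := fun i => range_mulSingle_normal i
  have hNnormal : ∀ i, (N i).Normal :=
    fun i => Subgroup.Normal.map (hRnormal i) _ α.surjective
  -- trivial factor characterization
  have hNbot : ∀ i, N i = ⊥ ↔ R i = ⊥ := by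
    intro i
    constructor
    · intro h
      rw [eq_bot_iff]
      intro x hx
      have : α x ∈ N i := ⟨x, hx, rfl⟩
      rw [h, Subgroup.mem_bot] at this
      have : x = 1 := by
        have := α.injective (this.trans (map_one α.toMonoidHom).symm)
        simpa using this
      simpa [Subgroup.mem_bot] using this
    · intro h
      show Subgroup.map α.toMonoidHom (R i) = ⊥
      rw [show R i = ⊥ from h, Subgroup.map_bot]
  -- pairwise trivial intersections
  have hRinf : ∀ i m, i ≠ m → R i ⊓ R m = ⊥ := by
    intro i m him
    rw [eq_bot_iff]
    intro x hx
    obtain ⟨hxi, hxm⟩ := Subgroup.mem_inf.mp hx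
    rw [show R i = (MonoidHom.mulSingle G i).range from rfl, mem_range_mulSingle_iff] at hxi
    rw [show R m = (MonoidHom.mulSingle G m).range from rfl, mem_range_mulSingle_iff] at hxm
    have : x = 1 := by
      funext l
      by_cases hl : l = i
      · subst hl; exact hxm l him
      · exact hxi l hl
    simp [Subgroup.mem_bot, this]
  have hNinf : ∀ i m, i ≠ m → N i ⊓ N m = ⊥ := by
    intro i m him
    rw [eq_bot_iff]
    intro x hx
    obtain ⟨hxi, hxm⟩ := Subgroup.mem_inf.mp hx
    obtain ⟨y, hy, rfl⟩ := hxi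
    obtain ⟨z, hz, hzy⟩ := hxm
    have hzyeq : z = y := α.injective hzy
    subst hzyeq
    have : z ∈ R i ⊓ R m := ⟨hy, hz⟩
    rw [hRinf i m him, Subgroup.mem_bot] at this
    subst this
    simp [Subgroup.mem_bot]
  -- Step 1 + Step 2 for α : each nontrivial N i is contained in some R j
  have hdich : ∀ i, N i = ⊥ ∨ ∃ j, N i ≤ R j := by
    intro i
    exact step2 (N i) (hNind i) (hNnormal i) (fun n hn j => step1 hcop α i j n hn)
  -- Step 1 + Step 2 for α.symm : each nontrivial R j is contained in some N m
  have hdich' : ∀ j, R j = ⊥ ∨ ∃ m, R j ≤ N m := by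
    intro j
    set N' : Subgroup (∀ i, G i) := Subgroup.map α.symm.toMonoidHom (R j) with hN'
    have hN'ind : Indecomposable ↥N' :=
      indecomposable_of_mulEquiv (α.symm.subgroupMap (R j)) (hRind j)
    have hN'normal : N'.Normal :=
      Subgroup.Normal.map (hRnormal j) _ α.symm.surjective
    rcases step2 N' hN'ind hN'normal
      (fun n hn l => step1 hcop α.symm j l n hn) with hbot | ⟨m, hm⟩
    · left
      rw [eq_bot_iff]
      intro x hx
      have : α.symm x ∈ N' := ⟨x, hx, rfl⟩
      rw [hbot, Subgroup.mem_bot] at this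
      have : x = 1 := by
        have := congrArg α this
        simpa using this
      simp [Subgroup.mem_bot, this]
    · right
      refine ⟨m, ?_⟩
      intro x hx
      have h1 : α.symm x ∈ N' := ⟨x, hx, rfl⟩
      have h2 : α.symm x ∈ R m := hm h1
      exact ⟨α.symm x, h2, by simp⟩
  -- each nontrivial N i equals some R j
  have key : ∀ i, N i ≠ ⊥ → ∃ j, N i = R j := by
    intro i hi
    rcases hdich i with hbot | ⟨j, hj⟩
    · exact absurd hbot hi
    refine ⟨j, le_antisymm hj ?_⟩
    have hRj : R j ≠ ⊥ := by
      intro hcon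
      apply hi
      rw [eq_bot_iff]
      exact hcon ▸ hj
    rcases hdich' j with hbot | ⟨m, hm⟩
    · exact absurd hbot hRj
    have him : i = m := by
      by_contra hne
      have : N i ≤ N i ⊓ N m := le_inf le_rfl (hj.trans hm)
      rw [hNinf i m hne] at this
      exact hi (eq_bot_iff.mpr this)
    rw [him]
    exact hm
  -- build the permutation
  set g : Fin k → Fin k := fun i => if h : N i = ⊥ then i else Classical.choose (key i h) with hg
  have hprop : ∀ i, N i = R (g i) := by
    intro i
    by_cases h : N i = ⊥
    · have hgi : g i = i := by rw [hg]; exact dif_pos h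
      rw [hgi, h]
      exact ((hNbot i).mp h).symm
    · have hgi : g i = Classical.choose (key i h) := by rw [hg]; exact dif_neg h
      rw [hgi]
      exact Classical.choose_spec (key i h)
  have hinj : Function.Injective g := by
    intro i₁ i₂ heq
    have hNeq : N i₁ = N i₂ := by rw [hprop i₁, hprop i₂, heq]
    by_cases h1 : N i₁ = ⊥
    · have h2 : N i₂ = ⊥ := hNeq ▸ h1
      have e1 : g i₁ = i₁ := by rw [hg]; exact dif_pos h1
      have e2 : g i₂ = i₂ := by rw [hg]; exact dif_pos h2
      rw [← e1, ← e2, heq]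
    · by_contra hne
      have : N i₁ ≤ N i₁ ⊓ N i₂ := le_inf le_rfl (le_of_eq hNeq)
      rw [hNinf i₁ i₂ hne] at this
      exact h1 (eq_bot_iff.mpr this)
  refine ⟨Equiv.ofBijective g (Finite.injective_iff_bijective.mp hinj), ?_⟩
  intro i
  have := hprop i
  exact this
end

section
/- Let G be a finite group such that gcd(|Z(G)|, |G/[G,G]|) = 1, where Z(G) is the center of G and [G,G] its commutator subgroup. If β is an automorphism of G satisfying g⁻¹·β(g) ∈ Z(G) for every g ∈ G (i.e., β is a normal automorphism, commuting with all inner automorphisms), then β is the identity automorphism. -/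
/-- Let `G` be a finite group with `gcd(|Z(G)|, |G/[G,G]|) = 1`. If `β` is
an automorphism of `G` such that `g⁻¹ · β(g) ∈ Z(G)` for all `g ∈ G` (i.e. `β` is a normal
automorphism, commuting with all inner automorphisms), then `β` is the identity. -/
theorem normal_automorphism_eq_one (G : Type*) [Group G] [Finite G]
    (hcop : Nat.Coprime (Nat.card ↥(Subgroup.center G)) (Nat.card (Abelianization G)))
    (β : MulAut G) (hβ : ∀ g : G, g⁻¹ * β g ∈ Subgroup.center G) :
    β = 1 := by
  -- f : G →* center G, g ↦ g⁻¹ β g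
  have fmul : ∀ g h : G, (g * h)⁻¹ * β (g * h) = (g⁻¹ * β g) * (h⁻¹ * β h) := by
    intro g h
    have hc := (Subgroup.mem_center_iff.mp (hβ g)) h
    rw [map_mul, mul_inv_rev]
    calc h⁻¹ * g⁻¹ * (β g * β h) = h⁻¹ * ((g⁻¹ * β g) * h) * (h⁻¹ * β h) := by
          simp [mul_assoc]
      _ = h⁻¹ * (h * (g⁻¹ * β g)) * (h⁻¹ * β h) := by rw [← hc]
      _ = (g⁻¹ * β g) * (h⁻¹ * β h) := by simp [mul_assoc]
  let f : G →* Subgroup.center G :=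
    { toFun := fun g => ⟨g⁻¹ * β g, hβ g⟩
      map_one' := by ext; simp
      map_mul' := fun g h => by ext; exact fmul g h }
  let F : Abelianization G →* Subgroup.center G := open scoped IsMulCommutative in Abelianization.lift f
  have key : ∀ g : G, f g = 1 := by
    intro g
    have h1 : orderOf (f g) ∣ Nat.card ↥(Subgroup.center G) := orderOf_dvd_natCard _
    have h2 : orderOf (f g) ∣ Nat.card (Abelianization G) := by
      have : f g = F (Abelianization.of g) := rfl
      rw [this]
      exact (orderOf_map_dvd F _).trans (orderOf_dvd_natCard _)
    have : orderOf (f g) = 1 := Nat.eq_one_of_dvd_coprimes hcop h1 h2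
    exact orderOf_eq_one_iff.mp this
  ext g
  have := congrArg (Subtype.val) (key g)
  simp only [f] at this
  have : g⁻¹ * β g = 1 := this
  simpa using (mul_eq_one_iff_inv_eq.mp this).symm
end

section
/- Let p ≥ 5 be a prime, let m be an integer with 2 < m and m ∣ p − 1, and let κ ≥ p. Then the natural module V = (F_p)^κ is a simple F_p[G₀(m,m,κ)]-module; that is, the only F_p-subspaces of V invariant under every element of G₀(m,m,κ) are 0 and V. -/
open Matrix

/-- The group `G₀(m,m,κ) ≤ GL_κ(F_p)`: the subgroup generated by the permutation matrices
of even permutations of the `κ` coordinates together with the diagonal matrices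
`diag(d₁, …, d_κ)` with `dᵢ^m = 1` for all `i` and `d₁⋯d_κ = 1`; thus
`G₀(m,m,κ) ≅ (C_m)^{κ−1} ⋊ A_κ`. -/
def G0 (p m κ : ℕ) : Subgroup (Matrix.GeneralLinearGroup (Fin κ) (ZMod p)) :=
  Subgroup.closure
    ({g : Matrix.GeneralLinearGroup (Fin κ) (ZMod p) |
        ∃ σ : Equiv.Perm (Fin κ), Equiv.Perm.sign σ = 1 ∧
          ∀ i j, (g : Matrix (Fin κ) (Fin κ) (ZMod p)) i j = if σ j = i then 1 else 0} ∪
      {g : Matrix.GeneralLinearGroup (Fin κ) (ZMod p) |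
        ∃ d : Fin κ → ZMod p, (∀ i, d i ^ m = 1) ∧ (∏ i, d i) = 1 ∧
          (g : Matrix (Fin κ) (Fin κ) (ZMod p)) = Matrix.diagonal d})

section Aux
variable {p κ : ℕ} [Fact p.Prime]

def permGL (p κ : ℕ) (σ : Equiv.Perm (Fin κ)) : Matrix.GeneralLinearGroup (Fin κ) (ZMod p) where
  val := (σ⁻¹).permMatrix (ZMod p)
  inv := σ.permMatrix (ZMod p)
  val_inv := by
    simp [Equiv.Perm.permMatrix, ← PEquiv.toMatrix_trans, ← Equiv.toPEquiv_trans,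
      Equiv.toPEquiv_refl, PEquiv.toMatrix_refl, Equiv.Perm.one_def, Equiv.Perm.inv_def]
  inv_val := by
    simp [Equiv.Perm.permMatrix, ← PEquiv.toMatrix_trans, ← Equiv.toPEquiv_trans,
      Equiv.toPEquiv_refl, PEquiv.toMatrix_refl, Equiv.Perm.one_def, Equiv.Perm.inv_def]

lemma permGL_entry (σ : Equiv.Perm (Fin κ)) (i j : Fin κ) :
    ((permGL p κ σ : Matrix (Fin κ) (Fin κ) (ZMod p))) i j = if σ j = i then 1 else 0 := by
  by_cases h : σ j = i
  · have h' : σ⁻¹ i = j := by rw [← h]; simp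
    simp [permGL, Equiv.Perm.permMatrix, PEquiv.toMatrix_apply, Equiv.toPEquiv_apply, h, h']
  · have h' : σ⁻¹ i ≠ j := fun hc => h (by rw [← hc]; simp)
    simp [permGL, Equiv.Perm.permMatrix, PEquiv.toMatrix_apply, Equiv.toPEquiv_apply, h, h']
    exact h'

lemma permGL_mulVec (σ : Equiv.Perm (Fin κ)) (v : Fin κ → ZMod p) :
    (permGL p κ σ : Matrix (Fin κ) (Fin κ) (ZMod p)) *ᵥ v = fun i => v (σ⁻¹ i) := by
  funext i
  simp only [Matrix.mulVec, dotProduct, permGL_entry]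
  rw [Finset.sum_eq_single (σ⁻¹ i)]
  · simp
  · intro b _ hb
    have : σ b ≠ i := fun hc => hb (by rw [← hc]; simp)
    simp [this]
  · simp

def diagGL (p κ : ℕ) [Fact p.Prime] (d : Fin κ → ZMod p) (hd : ∀ i, d i ≠ 0) :
    Matrix.GeneralLinearGroup (Fin κ) (ZMod p) where
  val := Matrix.diagonal d
  inv := Matrix.diagonal fun i => (d i)⁻¹
  val_inv := by
    rw [Matrix.diagonal_mul_diagonal]
    have : (fun i => d i * (d i)⁻¹) = fun _ : Fin κ => (1 : ZMod p) := by
      funext i; exact mul_inv_cancel₀ (hd i)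
    rw [this, Matrix.diagonal_one]
  inv_val := by
    rw [Matrix.diagonal_mul_diagonal]
    have : (fun i => (d i)⁻¹ * d i) = fun _ : Fin κ => (1 : ZMod p) := by
      funext i; exact inv_mul_cancel₀ (hd i)
    rw [this, Matrix.diagonal_one]

end Aux

/-- Let `p ≥ 5` be a prime, `m` an integer with `2 < m` and `m ∣ p − 1`,
and `κ ≥ p`.  Then the natural module `V = (F_p)^κ` is a simple
`F_p[G₀(m,m,κ)]`-module: the only subspaces of `V` invariant under every element of
`G₀(m,m,κ)` are `0` and `V`. -/
theorem G0_natural_module_simple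
    (p m κ : ℕ) (hp : p.Prime) (hp5 : 5 ≤ p)
    (hm : 2 < m) (hmdvd : m ∣ p - 1) (hκ : p ≤ κ)
    (W : Submodule (ZMod p) (Fin κ → ZMod p))
    (hW : ∀ g ∈ G0 p m κ, ∀ v ∈ W,
      Matrix.mulVec (g : Matrix (Fin κ) (Fin κ) (ZMod p)) v ∈ W) :
    W = ⊥ ∨ W = ⊤ := by
  haveI := Fact.mk hp
  by_cases hbot : W = ⊥
  · exact Or.inl hbot
  right
  have hκ5 : 5 ≤ κ := le_trans hp5 hκ
  -- a nontrivial m-th root of unity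
  obtain ⟨g, hg⟩ := IsCyclic.exists_generator (α := (ZMod p)ˣ)
  have hord : orderOf g = p - 1 := by
    rw [orderOf_eq_card_of_forall_mem_zpowers hg, Nat.card_eq_fintype_card, ZMod.card_units p]
  have hp1 : 0 < p - 1 := by omega
  have hdivpos : 0 < (p - 1) / m := Nat.div_pos (Nat.le_of_dvd hp1 hmdvd) (by omega)
  set ζu : (ZMod p)ˣ := g ^ ((p - 1) / m) with hζu
  have hζum : ζu ^ m = 1 := by
    rw [hζu, ← pow_mul, Nat.div_mul_cancel hmdvd, ← hord, pow_orderOf_eq_one]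
  have hζune : ζu ≠ 1 := by
    intro h
    have : orderOf g ∣ (p - 1) / m := orderOf_dvd_of_pow_eq_one h
    have := Nat.le_of_dvd hdivpos (hord ▸ this)
    have := Nat.div_lt_self hp1 (by omega : 1 < m)
    omega
  set ζ : ZMod p := (ζu : ZMod p) with hζ
  have hζm : ζ ^ m = 1 := by
    rw [hζ, ← Units.val_pow_eq_pow_val, hζum, Units.val_one]
  have hζ1 : ζ ≠ 1 := fun h => hζune (Units.ext h)
  have hζ0 : ζ ≠ 0 := Units.ne_zero ζu
  -- diagonal step: multiply coordinate i by ζ, coordinate j by ζ⁻¹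
  have hdiag : ∀ (i j : Fin κ), i ≠ j → ∀ v ∈ W,
      (fun k => (if k = i then ζ else if k = j then ζ⁻¹ else 1) * v k - v k) ∈ W := by
    intro i j hij v hv
    set d : Fin κ → ZMod p := fun k => if k = i then ζ else if k = j then ζ⁻¹ else 1 with hd
    have hd0 : ∀ k, d k ≠ 0 := by
      intro k
      simp only [hd]
      split
      · exact hζ0
      split
      · exact inv_ne_zero hζ0
      · exact one_ne_zero
    have hdm : ∀ k, d k ^ m = 1 := by
      intro k
      simp only [hd]
      split
      · exact hζm
      split
      · rw [inv_pow, hζm, inv_one]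
      · exact one_pow m
    have hdprod : ∏ k, d k = 1 := by
      have : d = fun k => (if k = i then ζ else 1) * (if k = j then ζ⁻¹ else 1) := by
        funext k
        by_cases h1 : k = i
        · subst h1
          simp [hd, if_neg hij]
        · by_cases h2 : k = j <;> simp [hd, h1, h2, Ne.symm hij]
      rw [this, Finset.prod_mul_distrib]
      simp [Finset.prod_ite_eq', mul_inv_cancel₀ hζ0]
    have hmem : diagGL p κ d hd0 ∈ G0 p m κ :=
      Subgroup.subset_closure (Or.inr ⟨d, hdm, hdprod, rfl⟩)
    have h1 := hW _ hmem v hv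
    have h2 : (diagGL p κ d hd0 : Matrix (Fin κ) (Fin κ) (ZMod p)) *ᵥ v
        = fun k => d k * v k := by
      funext k
      exact Matrix.mulVec_diagonal d v k
    rw [h2] at h1
    exact W.sub_mem h1 hv
  -- every standard basis vector lies in W
  have hsingle : ∃ i : Fin κ, (fun l => if i = l then (1 : ZMod p) else 0) ∈ W := by
    rw [Submodule.eq_bot_iff] at hbot
    push_neg at hbot
    obtain ⟨v, hv, hvne⟩ := hbot
    obtain ⟨i, hvi⟩ := Function.ne_iff.mp hvne
    simp only [Pi.zero_apply] at hvi
    -- pick j ≠ i and k ∉ {i, j}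
    have hjex : ∃ jj : Fin κ, jj ≠ i := by
      apply Fintype.exists_ne_of_one_lt_card
      simp only [Fintype.card_fin]; omega
    obtain ⟨j, hj⟩ := hjex
    have hkex : (({i, j} : Finset (Fin κ))ᶜ).Nonempty := by
      rw [← Finset.card_pos, Finset.card_compl]
      have h2 : ({i, j} : Finset (Fin κ)).card ≤ 2 :=
        (Finset.card_insert_le i {j}).trans (by simp)
      simp only [Fintype.card_fin]
      omega
    obtain ⟨k, hk⟩ := hkex
    rw [Finset.mem_compl, Finset.mem_insert, Finset.mem_singleton] at hk
    push_neg at hk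
    obtain ⟨hki, hkj⟩ := hk
    refine ⟨i, ?_⟩
    have hw1 := hdiag i j (Ne.symm hj) v hv
    set w1 : Fin κ → ZMod p :=
      fun l => (if l = i then ζ else if l = j then ζ⁻¹ else 1) * v l - v l with hw1def
    have hw2 := hdiag i k (Ne.symm hki) w1 hw1
    set w2 : Fin κ → ZMod p :=
      fun l => (if l = i then ζ else if l = k then ζ⁻¹ else 1) * w1 l - w1 l with hw2def
    set c : ZMod p := (ζ - 1) * ((ζ - 1) * v i) with hc
    have hcne : c ≠ 0 := by
      have : ζ - 1 ≠ 0 := sub_ne_zero.mpr hζ1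
      exact mul_ne_zero this (mul_ne_zero this hvi)
    have hw2eq : w2 = fun l => if i = l then c else 0 := by
      funext l
      by_cases h1 : l = i
      · subst h1
        simp only [hw2def, hw1def, hc, eq_self_iff_true, if_true]
        ring
      · rw [if_neg (fun h => h1 h.symm)]
        by_cases h2 : l = j
        · subst h2
          simp only [hw2def, hw1def, if_neg h1, if_neg (Ne.symm hkj)]
          ring
        · by_cases h3 : l = k
          · subst h3
            simp only [hw2def, hw1def, if_neg h1, if_pos rfl, if_neg h2]
            ring
          · simp only [hw2def, hw1def, if_neg h1, if_neg h2, if_neg h3]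
            ring
    have : (fun l => if i = l then (1 : ZMod p) else 0) = c⁻¹ • w2 := by
      funext l
      rw [hw2eq]
      by_cases h : i = l <;> simp [h, inv_mul_cancel₀ hcne]
    rw [this]
    exact W.smul_mem _ hw2
  obtain ⟨i, hi⟩ := hsingle
  have hall : ∀ l : Fin κ, (fun j => if l = j then (1 : ZMod p) else 0) ∈ W := by
    intro l
    by_cases hl : l = i
    · subst hl; exact hi
    -- pick t ≠ t' both ≠ l
    have h2card : 1 < (({l} : Finset (Fin κ))ᶜ).card := by
      rw [Finset.card_compl]
      simp only [Fintype.card_fin, Finset.card_singleton]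
      omega
    obtain ⟨t, ht, t', ht', htt'⟩ := Finset.one_lt_card.mp h2card
    rw [Finset.mem_compl, Finset.mem_singleton] at ht ht'
    set σ : Equiv.Perm (Fin κ) := Equiv.swap t t' * Equiv.swap i l with hσ
    have hsign : Equiv.Perm.sign σ = 1 := by
      rw [hσ, _root_.map_mul, Equiv.Perm.sign_swap htt', Equiv.Perm.sign_swap (fun h => hl h.symm)]
      decide
    have hmem : permGL p κ σ ∈ G0 p m κ :=
      Subgroup.subset_closure (Or.inl ⟨σ, hsign, fun a b => permGL_entry σ a b⟩)
    have h1 := hW _ hmem _ hi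
    rw [permGL_mulVec] at h1
    have hσi : σ i = l := by
      rw [hσ]
      simp only [Equiv.Perm.mul_apply, Equiv.swap_apply_left]
      exact Equiv.swap_apply_of_ne_of_ne (Ne.symm ht) (Ne.symm ht')
    have heq : (fun k => if i = σ⁻¹ k then (1 : ZMod p) else 0)
        = fun j => if l = j then (1 : ZMod p) else 0 := by
      funext k
      have hiff : i = σ⁻¹ k ↔ l = k := by
        rw [eq_comm, Equiv.Perm.inv_def, Equiv.symm_apply_eq, hσi, eq_comm]
      simp only [hiff]
    rw [show (fun k => (fun j => if i = j then (1:ZMod p) else 0) (σ⁻¹ k)) =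
        (fun k => if i = σ⁻¹ k then (1 : ZMod p) else 0) from rfl, heq] at h1
    exact h1
  rw [Submodule.eq_top_iff']
  intro v
  rw [pi_eq_sum_univ v]
  exact W.sum_mem fun i _ => W.smul_mem _ (hall i)
end

section
/- Let p ≥ 5 be a prime, let m be an integer with 2 < m and m ∣ p − 1, and let κ ≥ p. If N is a normal subgroup of G₀(m,m,κ) whose order is divisible by p, then N = G₀(m,m,κ); that is, G₀(m,m,κ) has no proper normal subgroup of order a multiple of p. -/
open Matrix Equiv Equiv.Perm

theorem Equiv.Perm.inv_apply_self {α : Type*} (f : Equiv.Perm α) (x : α) : f⁻¹ (f x) = x :=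
  f.symm_apply_apply x

theorem Equiv.Perm.apply_inv_self {α : Type*} (f : Equiv.Perm α) (x : α) : f (f⁻¹ x) = x :=
  f.apply_symm_apply x

namespace G0X

variable {p κ : ℕ}

/-- monomial matrix: permutation σ with column scalings d. -/
def mmat (κ p : ℕ) (σ : Equiv.Perm (Fin κ)) (d : Fin κ → ZMod p) :
    Matrix (Fin κ) (Fin κ) (ZMod p) :=
  Matrix.of fun i j => if σ j = i then d j else 0

lemma mmat_apply (σ : Equiv.Perm (Fin κ)) (d : Fin κ → ZMod p) (i j : Fin κ) :
    mmat κ p σ d i j = if σ j = i then d j else 0 := rfl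

lemma mmat_one : mmat κ p 1 1 = 1 := by
  ext i j
  simp only [mmat_apply, Matrix.one_apply, Equiv.Perm.one_apply, Pi.one_apply]
  by_cases h : j = i
  · simp [h]
  · simp [h, Ne.symm h]

lemma mmat_mul (σ τ : Equiv.Perm (Fin κ)) (d e : Fin κ → ZMod p) :
    mmat κ p σ d * mmat κ p τ e = mmat κ p (σ * τ) (fun j => d (τ j) * e j) := by
  ext i j
  rw [Matrix.mul_apply]
  rw [Finset.sum_eq_single (τ j)]
  · simp [mmat_apply, Equiv.Perm.mul_apply, ite_mul]
    congr 1
  · intro k _ hk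
    simp [mmat_apply, (Ne.symm hk : ¬ τ j = k)]
  · intro h; exact absurd (Finset.mem_univ _) h

lemma mmat_diag_pow (d : Fin κ → ZMod p) (k : ℕ) :
    mmat κ p 1 d ^ k = mmat κ p 1 (fun j => d j ^ k) := by
  induction k with
  | zero =>
    have h1 : (fun j : Fin κ => d j ^ 0) = (1 : Fin κ → ZMod p) := by funext j; simp
    rw [pow_zero, h1, mmat_one]
  | succ k ih =>
    rw [pow_succ, ih, mmat_mul]
    simp [pow_succ]

lemma mmat_sigma_eq {σ σ' : Equiv.Perm (Fin κ)} {d d' : Fin κ → ZMod p}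
    (hd : ∀ j, d j ≠ 0) (h : mmat κ p σ d = mmat κ p σ' d') : σ = σ' := by
  apply Equiv.ext; intro j
  have h2 := congrFun (congrFun h (σ j)) j
  simp only [mmat_apply, if_pos rfl] at h2
  by_contra hne
  rw [if_neg (fun hh : σ' j = σ j => hne hh.symm)] at h2
  exact hd j h2

lemma diagonal_eq_mmat (d : Fin κ → ZMod p) : Matrix.diagonal d = mmat κ p 1 d := by
  ext i j
  simp only [Matrix.diagonal_apply, mmat_apply, Equiv.Perm.one_apply]
  by_cases h : j = i
  · simp [h]
  · simp [h, Ne.symm h]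

end G0X

section B
namespace G0X
variable {p m κ : ℕ}

/-- entries of a monomial matrix coming from a unit are nonzero -/
lemma unit_d_ne_zero [Fact p.Prime] {g : Matrix.GeneralLinearGroup (Fin κ) (ZMod p)}
    {σ : Equiv.Perm (Fin κ)} {d : Fin κ → ZMod p}
    (h : (g : Matrix (Fin κ) (Fin κ) (ZMod p)) = mmat κ p σ d) (j : Fin κ) : d j ≠ 0 := by
  intro hdj
  have h1 : ((g⁻¹ : Matrix.GeneralLinearGroup (Fin κ) (ZMod p)) : Matrix (Fin κ) (Fin κ) (ZMod p))
      * (g : Matrix (Fin κ) (Fin κ) (ZMod p)) = 1 := by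
    exact_mod_cast g.inv_mul
  have h2 := congrFun (congrFun h1 j) j
  rw [Matrix.mul_apply] at h2
  have h3 : ∀ k, ((g⁻¹ : Matrix.GeneralLinearGroup (Fin κ) (ZMod p)) :
      Matrix (Fin κ) (Fin κ) (ZMod p)) j k * (g : Matrix (Fin κ) (Fin κ) (ZMod p)) k j = 0 := by
    intro k
    rw [h, mmat_apply]
    by_cases hk : σ j = k
    · rw [if_pos hk, hdj, mul_zero]
    · rw [if_neg hk, mul_zero]
  rw [Finset.sum_congr rfl (fun k _ => h3 k), Finset.sum_const_zero] at h2
  rw [Matrix.one_apply_eq] at h2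
  exact one_ne_zero h2.symm

/-- the unit given by an invertible monomial matrix -/
def gmat [Fact p.Prime] (σ : Equiv.Perm (Fin κ)) (d : Fin κ → ZMod p) (hd : ∀ j, d j ≠ 0) :
    Matrix.GeneralLinearGroup (Fin κ) (ZMod p) where
  val := mmat κ p σ d
  inv := mmat κ p σ⁻¹ (fun j => (d (σ⁻¹ j))⁻¹)
  val_inv := by
    rw [mmat_mul]
    have : (fun j => d (σ⁻¹ j) * (d (σ⁻¹ j))⁻¹) = (1 : Fin κ → ZMod p) := by
      funext j; exact mul_inv_cancel₀ (hd _)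
    rw [this, mul_inv_cancel, mmat_one]
  inv_val := by
    rw [mmat_mul]
    have : (fun j => (d (σ⁻¹ (σ j)))⁻¹ * d j) = (1 : Fin κ → ZMod p) := by
      funext j
      rw [Equiv.Perm.inv_apply_self]
      exact inv_mul_cancel₀ (hd _)
    rw [this, inv_mul_cancel, mmat_one]

@[simp] lemma gmat_val [Fact p.Prime] (σ : Equiv.Perm (Fin κ)) (d : Fin κ → ZMod p)
    (hd : ∀ j, d j ≠ 0) :
    ((gmat σ d hd : Matrix.GeneralLinearGroup (Fin κ) (ZMod p)) :
      Matrix (Fin κ) (Fin κ) (ZMod p)) = mmat κ p σ d := rfl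

lemma inv_val_eq [Fact p.Prime] {g : Matrix.GeneralLinearGroup (Fin κ) (ZMod p)}
    {σ : Equiv.Perm (Fin κ)} {d : Fin κ → ZMod p} (hd : ∀ j, d j ≠ 0)
    (h : (g : Matrix (Fin κ) (Fin κ) (ZMod p)) = mmat κ p σ d) :
    ((g⁻¹ : Matrix.GeneralLinearGroup (Fin κ) (ZMod p)) : Matrix (Fin κ) (Fin κ) (ZMod p))
      = mmat κ p σ⁻¹ (fun j => (d (σ⁻¹ j))⁻¹) := by
  have : g = gmat σ d hd := Units.ext h
  rw [this]
  rfl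

/-- the monomial description of elements of `G0`. -/
def IsMono (p m κ : ℕ) (g : Matrix.GeneralLinearGroup (Fin κ) (ZMod p)) : Prop :=
  ∃ σ : Equiv.Perm (Fin κ), ∃ d : Fin κ → ZMod p,
    Equiv.Perm.sign σ = 1 ∧ (∀ i, d i ^ m = 1) ∧ (∏ i, d i) = 1 ∧
      (g : Matrix (Fin κ) (Fin κ) (ZMod p)) = mmat κ p σ d

lemma isMono_of_mem [Fact p.Prime] (hm : m ≠ 0) {g : Matrix.GeneralLinearGroup (Fin κ) (ZMod p)}
    (hg : g ∈ G0 p m κ) : IsMono p m κ g := by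
  induction hg using Subgroup.closure_induction with
  | mem g hgen =>
    rcases hgen with h | h
    · obtain ⟨σ, hsgn, hentry⟩ := h
      refine ⟨σ, fun _ => 1, hsgn, fun i => one_pow m, Finset.prod_const_one, ?_⟩
      ext i j
      rw [hentry i j, mmat_apply]
    · obtain ⟨d, hpow, hprod, hdiag⟩ := h
      exact ⟨1, d, by simp, hpow, hprod, by rw [hdiag, diagonal_eq_mmat]⟩
  | one => exact ⟨1, 1, by simp, fun i => one_pow m, Finset.prod_const_one, by rw [mmat_one]; rfl⟩
  | mul a b _ _ ha hb =>
    obtain ⟨σ, d, hs, hp1, hp2, hmat⟩ := ha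
    obtain ⟨τ, e, hs', hp1', hp2', hmat'⟩ := hb
    refine ⟨σ * τ, fun j => d (τ j) * e j, by simp [hs, hs'], ?_, ?_, ?_⟩
    · intro i; rw [mul_pow, hp1, hp1', one_mul]
    · rw [Finset.prod_mul_distrib]
      rw [Equiv.prod_comp τ d, hp2, hp2', one_mul]
    · push_cast
      rw [hmat, hmat', mmat_mul]
  | inv a _ ha =>
    obtain ⟨σ, d, hs, hp1, hp2, hmat⟩ := ha
    have hd : ∀ j, d j ≠ 0 := unit_d_ne_zero hmat
    refine ⟨σ⁻¹, fun j => (d (σ⁻¹ j))⁻¹, by simp [hs], ?_, ?_, inv_val_eq hd hmat⟩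
    · intro i
      show (d (σ⁻¹ i))⁻¹ ^ m = 1
      rw [inv_pow, hp1, inv_one]
    · show (∏ i, (d (σ⁻¹ i))⁻¹) = 1
      have h4 : (∏ i, (d (σ⁻¹ i))⁻¹) = (∏ i, d (σ⁻¹ i))⁻¹ := by
        rw [Finset.prod_inv_distrib]
      rw [h4, Equiv.prod_comp σ⁻¹ d, hp2, inv_one]

lemma gmat_mem_of [Fact p.Prime] {σ : Equiv.Perm (Fin κ)} {d : Fin κ → ZMod p}
    (hd : ∀ j, d j ≠ 0) (hs : Equiv.Perm.sign σ = 1) (hp1 : ∀ i, d i ^ m = 1)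
    (hp2 : (∏ i, d i) = 1) : gmat σ d hd ∈ G0 p m κ := by
  have h1 : (fun _ : Fin κ => (1 : ZMod p)) = fun _ => 1 := rfl
  have hone : ∀ j : Fin κ, (1 : ZMod p) ≠ 0 := fun _ => one_ne_zero
  have hdecomp : gmat σ d hd = gmat σ (fun _ => 1) hone * gmat 1 d hd := by
    apply Units.ext
    push_cast
    rw [gmat_val, gmat_val, gmat_val, mmat_mul]
    simp
  rw [hdecomp]
  apply mul_mem
  · apply Subgroup.subset_closure
    left
    exact ⟨σ, hs, fun i j => rfl⟩
  · apply Subgroup.subset_closure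
    right
    exact ⟨d, hp1, hp2, by rw [gmat_val, diagonal_eq_mmat]⟩

lemma mem_of_mono [Fact p.Prime] {g : Matrix.GeneralLinearGroup (Fin κ) (ZMod p)}
    (h : IsMono p m κ g) : g ∈ G0 p m κ := by
  obtain ⟨σ, d, hs, hp1, hp2, hmat⟩ := h
  have hd : ∀ j, d j ≠ 0 := unit_d_ne_zero hmat
  have : g = gmat σ d hd := Units.ext hmat
  rw [this]
  exact gmat_mem_of hd hs hp1 hp2

end G0X
end B
section C
namespace G0X
variable {p m κ : ℕ} [Fact p.Prime] (hm : m ≠ 0)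

variable (p m κ) in
/-- value in `(Fin κ → ZMod p)` at `i`: `a` at `i`, `a⁻¹` at `j`, `1` elsewhere -/
def cvec (i j : Fin κ) (a : ZMod p) : Fin κ → ZMod p :=
  fun l => if l = i then a else if l = j then a⁻¹ else 1

noncomputable def permOf (g : ↥(G0 p m κ)) : Equiv.Perm (Fin κ) :=
  (isMono_of_mem hm g.2).choose

lemma permOf_spec (g : ↥(G0 p m κ)) :
    ∃ d : Fin κ → ZMod p, Equiv.Perm.sign (permOf hm g) = 1 ∧ (∀ i, d i ^ m = 1) ∧
      (∏ i, d i) = 1 ∧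
      ((g : Matrix.GeneralLinearGroup (Fin κ) (ZMod p)) : Matrix (Fin κ) (Fin κ) (ZMod p))
        = mmat κ p (permOf hm g) d := by
  obtain ⟨d, h⟩ := (isMono_of_mem hm g.2).choose_spec
  exact ⟨d, h⟩

lemma permOf_eq {g : ↥(G0 p m κ)} {σ : Equiv.Perm (Fin κ)} {d : Fin κ → ZMod p}
    (h : ((g : Matrix.GeneralLinearGroup (Fin κ) (ZMod p)) : Matrix (Fin κ) (Fin κ) (ZMod p))
      = mmat κ p σ d) : permOf hm g = σ := by
  obtain ⟨e, _, _, _, he⟩ := permOf_spec hm g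
  have hd : ∀ j, e j ≠ 0 := unit_d_ne_zero he
  exact mmat_sigma_eq hd (he.symm.trans h)

lemma permOf_sign (g : ↥(G0 p m κ)) : Equiv.Perm.sign (permOf hm g) = 1 :=
  (permOf_spec hm g).choose_spec.1

noncomputable def permHom : ↥(G0 p m κ) →* Equiv.Perm (Fin κ) where
  toFun := permOf hm
  map_one' := by
    apply permOf_eq hm
    show ((1 : Matrix.GeneralLinearGroup (Fin κ) (ZMod p)) : Matrix (Fin κ) (Fin κ) (ZMod p))
      = mmat κ p 1 1
    rw [mmat_one]; rfl
  map_mul' := by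
    intro g h
    obtain ⟨d, _, _, _, hd⟩ := permOf_spec hm g
    obtain ⟨e, _, _, _, he⟩ := permOf_spec hm h
    apply permOf_eq hm
    show ((g : Matrix.GeneralLinearGroup (Fin κ) (ZMod p)) *
      (h : Matrix.GeneralLinearGroup (Fin κ) (ZMod p)) : Matrix (Fin κ) (Fin κ) (ZMod p)) = _
    push_cast
    rw [hd, he, mmat_mul]

lemma permHom_apply (g : ↥(G0 p m κ)) : permHom hm g = permOf hm g := rfl

/-- elements in the kernel of `permHom` are diagonal, hence of order dividing `m`. -/
lemma pow_m_eq_one_of_permOf_eq_one {g : ↥(G0 p m κ)} (h : permOf hm g = 1) :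
    g ^ m = 1 := by
  obtain ⟨d, _, hp1, _, hd⟩ := permOf_spec hm g
  rw [h] at hd
  apply Subtype.ext
  apply Units.ext
  show (((g : Matrix.GeneralLinearGroup (Fin κ) (ZMod p)) ^ m : Matrix.GeneralLinearGroup (Fin κ) (ZMod p)) : Matrix (Fin κ) (Fin κ) (ZMod p)) = _
  push_cast
  rw [hd, mmat_diag_pow]
  have : (fun j => d j ^ m) = (1 : Fin κ → ZMod p) := by funext j; exact hp1 j
  rw [this, mmat_one]

end G0X
end C
section D
namespace G0X

lemma conj_eq_top_of_prime_order {α : Type*} [Fintype α] [DecidableEq α] {q : ℕ}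
    (hq : q.Prime) (hq5 : 5 ≤ q) (h5 : 5 ≤ Fintype.card α)
    (H : Subgroup ↥(alternatingGroup α)) (hH : H.Normal)
    (u : ↥(alternatingGroup α)) (hu : u ∈ H)
    (hne : (u : Equiv.Perm α) ≠ 1) (hup : (u : Equiv.Perm α) ^ q = 1) :
    H = ⊤ := by
  haveI : Fact q.Prime := ⟨hq⟩
  set σ : Equiv.Perm α := (u : Equiv.Perm α) with hσdef
  obtain ⟨a, ha⟩ : ∃ a, σ a ≠ a := by
    by_contra h
    push_neg at h
    exact hne (Equiv.ext h)
  have hordσ : orderOf σ = q := orderOf_eq_prime hup hne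
  have key : ∀ j : ℕ, 1 ≤ j → j ≤ 3 → (σ ^ j) a ≠ a := by
    intro j h1 h3 hja
    have hjq : ¬ q ∣ j := by
      intro hdvd
      have := Nat.le_of_dvd (by omega) hdvd
      omega
    have hco : Nat.Coprime q j := (Nat.Prime.coprime_iff_not_dvd hq).2 hjq
    have hco' : Nat.Coprime j q := hco.symm
    obtain ⟨k, -, hk⟩ := Nat.exists_mul_mod_eq_one_of_coprime hco' (by omega)
    have hfix : ∀ t : ℕ, ((σ ^ j) ^ t) a = a := by
      intro t
      induction t with
      | zero => simp
      | succ t ih => rw [pow_succ, Equiv.Perm.mul_apply, hja]; exact ih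
    have hσa : σ a = a := by
      have h2' : σ ^ (j * k) = σ := by
        conv_rhs => rw [← pow_one σ]
        rw [← hk, ← hordσ, pow_mod_orderOf]
      have h3' := hfix k
      rw [← pow_mul, h2'] at h3'
      exact h3'
    exact ha hσa
  set b := σ a with hb
  set x := σ b with hx
  set y := σ x with hy
  have hpow1 : (σ ^ 1) a = b := by simp [hb]
  have hpow2 : (σ ^ 2) a = x := by
    rw [hx, hb, pow_two, Equiv.Perm.mul_apply]
  have hpow3 : (σ ^ 3) a = y := by
    rw [hy, hx, hb, pow_succ, pow_two, Equiv.Perm.mul_apply, Equiv.Perm.mul_apply]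
  have hab : a ≠ b := fun h => key 1 le_rfl (by omega) (by rw [hpow1, ← h])
  have hax : a ≠ x := fun h => key 2 (by omega) (by omega) (by rw [hpow2, ← h])
  have hay : a ≠ y := fun h => key 3 (by omega) (by omega) (by rw [hpow3, ← h])
  have hbx : b ≠ x := fun h => hab (σ.injective h)
  have hby : b ≠ y := fun h => hax (σ.injective h)
  have hxy : x ≠ y := fun h => hbx (σ.injective h)
  set τ : Equiv.Perm α := Equiv.swap a x * Equiv.swap a b with hτ
  have hτsign : Equiv.Perm.sign τ = 1 := by
    rw [hτ, _root_.map_mul, Equiv.Perm.sign_swap hax, Equiv.Perm.sign_swap hab]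
    decide
  set τA : ↥(alternatingGroup α) :=
    ⟨τ, Equiv.Perm.mem_alternatingGroup.2 hτsign⟩ with hτA
  set w : ↥(alternatingGroup α) := τA * u * τA⁻¹ * u⁻¹ with hw
  have hwH : w ∈ H := by
    rw [hw]
    exact mul_mem (hH.conj_mem u hu τA) (inv_mem hu)
  set ρ : Equiv.Perm α := Equiv.swap a y * Equiv.swap a b with hρdef
  have hρ3 : Equiv.Perm.IsThreeCycle ρ :=
    Equiv.Perm.isThreeCycle_swap_mul_swap_same hay hab (Ne.symm hby)
  -- evaluation facts
  have hτa : τ a = b := by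
    rw [hτ, Equiv.Perm.mul_apply, Equiv.swap_apply_left,
      Equiv.swap_apply_of_ne_of_ne (Ne.symm hab) hbx]
  have hτb : τ b = x := by
    rw [hτ, Equiv.Perm.mul_apply, Equiv.swap_apply_right, Equiv.swap_apply_left]
  have hτx : τ x = a := by
    rw [hτ, Equiv.Perm.mul_apply,
      Equiv.swap_apply_of_ne_of_ne (Ne.symm hax) (Ne.symm hbx), Equiv.swap_apply_right]
  have hτother : ∀ z, z ≠ a → z ≠ b → z ≠ x → τ z = z := by
    intro z hza hzb hzx
    rw [hτ, Equiv.Perm.mul_apply, Equiv.swap_apply_of_ne_of_ne hza hzb,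
      Equiv.swap_apply_of_ne_of_ne hza hzx]
  have hτinv : ∀ z, τ⁻¹ (τ z) = z := fun z => Equiv.Perm.inv_apply_self τ z
  have hτia : τ⁻¹ a = x := by rw [← hτx, hτinv]
  have hτib : τ⁻¹ b = a := by rw [← hτa, hτinv]
  have hτix : τ⁻¹ x = b := by rw [← hτb, hτinv]
  have hτiother : ∀ z, z ≠ a → z ≠ b → z ≠ x → τ⁻¹ z = z := by
    intro z hza hzb hzx
    conv_lhs => rw [← hτother z hza hzb hzx]
    exact hτinv z
  have hσia : σ⁻¹ b = a := by rw [hb, Equiv.Perm.inv_apply_self]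
  have hσib : σ⁻¹ x = b := by rw [hx, Equiv.Perm.inv_apply_self]
  have hσix : σ⁻¹ y = x := by rw [hy, Equiv.Perm.inv_apply_self]
  have hwρ : (w : Equiv.Perm α) = ρ := by
    have hcoe : (w : Equiv.Perm α) = τ * σ * τ⁻¹ * σ⁻¹ := by
      rw [hw]
      push_cast
      rfl
    have hσb : σ b = x := hx.symm
    have hσx : σ x = y := hy.symm
    apply Equiv.ext
    intro z
    rw [hcoe]
    simp only [Equiv.Perm.mul_apply]
    by_cases hza : z = a
    · rw [hza]
      have h2 : σ⁻¹ a ≠ a := by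
        intro h
        have hc := congrArg σ h
        rw [Equiv.Perm.apply_inv_self] at hc
        exact ha hc.symm
      have h3 : σ⁻¹ a ≠ b := by
        intro h
        have hc := congrArg σ h
        rw [Equiv.Perm.apply_inv_self] at hc
        exact hax (hc.trans hx.symm)
      have h4 : σ⁻¹ a ≠ x := by
        intro h
        have hc := congrArg σ h
        rw [Equiv.Perm.apply_inv_self] at hc
        exact hay (hc.trans hy.symm)
      rw [hτiother _ h2 h3 h4, Equiv.Perm.apply_inv_self, hτa, hρdef,
        Equiv.Perm.mul_apply, Equiv.swap_apply_left,
        Equiv.swap_apply_of_ne_of_ne (Ne.symm hab) hby]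
    · by_cases hzb : z = b
      · rw [hzb, hσia, hτia, hσx,
          hτother y (Ne.symm hay) (Ne.symm hby) (Ne.symm hxy), hρdef,
          Equiv.Perm.mul_apply, Equiv.swap_apply_right, Equiv.swap_apply_left]
      · by_cases hzx : z = x
        · rw [hzx, hσib, hτib, ← hb, hτb, hρdef, Equiv.Perm.mul_apply,
            Equiv.swap_apply_of_ne_of_ne (Ne.symm hax) (Ne.symm hbx),
            Equiv.swap_apply_of_ne_of_ne (Ne.symm hax) hxy]
        · by_cases hzy : z = y
          · rw [hzy, hσix, hτix, hσb, hτx, hρdef, Equiv.Perm.mul_apply,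
              Equiv.swap_apply_of_ne_of_ne (Ne.symm hay) (Ne.symm hby),
              Equiv.swap_apply_right]
          · have h2 : σ⁻¹ z ≠ a := by
              intro h
              have hc := congrArg σ h
              rw [Equiv.Perm.apply_inv_self] at hc
              exact hzb (hc.trans hb.symm)
            have h3 : σ⁻¹ z ≠ b := by
              intro h
              have hc := congrArg σ h
              rw [Equiv.Perm.apply_inv_self] at hc
              exact hzx (hc.trans hx.symm)
            have h4 : σ⁻¹ z ≠ x := by
              intro h
              have hc := congrArg σ h
              rw [Equiv.Perm.apply_inv_self] at hc
              exact hzy (hc.trans hy.symm)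
            rw [hτiother _ h2 h3 h4, Equiv.Perm.apply_inv_self,
              hτother z hza hzb hzx, hρdef, Equiv.Perm.mul_apply,
              Equiv.swap_apply_of_ne_of_ne hza hzb,
              Equiv.swap_apply_of_ne_of_ne hza hzy]
  -- conclude via the normal closure of a three-cycle
  haveI : H.Normal := hH
  have hmemH : (⟨ρ, hρ3.mem_alternatingGroup⟩ : ↥(alternatingGroup α)) ∈ H := by
    have : w = ⟨ρ, hρ3.mem_alternatingGroup⟩ := Subtype.ext hwρ
    rw [← this]
    exact hwH
  rw [eq_top_iff, ← hρ3.alternating_normalClosure (by rwa [Nat.card_eq_fintype_card])]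
  exact Subgroup.normalClosure_le_normal (Set.singleton_subset_iff.2 hmemH)

end G0X
end D
section E
namespace G0X
variable {p m κ : ℕ} [Fact p.Prime] (hm : m ≠ 0)

/-- diagonal matrices as a monoid hom from the pointwise-multiplication monoid. -/
def diagHom (κ p : ℕ) : (Fin κ → ZMod p) →* Matrix (Fin κ) (Fin κ) (ZMod p) where
  toFun d := mmat κ p 1 d
  map_one' := mmat_one
  map_mul' d e := by
    rw [mmat_mul]
    rfl

lemma diagHom_apply (d : Fin κ → ZMod p) : diagHom κ p d = mmat κ p 1 d := rfl

/-- the coercion `↥(G0 p m κ) →* Matrix` as a monoid hom. -/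
def valHom (p m κ : ℕ) : ↥(G0 p m κ) →* Matrix (Fin κ) (Fin κ) (ZMod p) :=
  (Units.coeHom (Matrix (Fin κ) (Fin κ) (ZMod p))).comp (G0 p m κ).subtype

lemma valHom_apply (g : ↥(G0 p m κ)) :
    valHom p m κ g
      = ((g : Matrix.GeneralLinearGroup (Fin κ) (ZMod p)) : Matrix (Fin κ) (Fin κ) (ZMod p)) := rfl

/-- the matrix of a commutator of a diagonal element with an arbitrary element of `G0`. -/
lemma comm_val (nElt : ↥(G0 p m κ)) {h : Fin κ → ZMod p} (hd : ∀ j, h j ≠ 0)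
    (hElt : ↥(G0 p m κ))
    (hval : ((hElt : Matrix.GeneralLinearGroup (Fin κ) (ZMod p)) :
      Matrix (Fin κ) (Fin κ) (ZMod p)) = mmat κ p 1 h) :
    ((((hElt * nElt * hElt⁻¹ * nElt⁻¹ : ↥(G0 p m κ))) :
        Matrix.GeneralLinearGroup (Fin κ) (ZMod p)) : Matrix (Fin κ) (Fin κ) (ZMod p))
      = mmat κ p 1 (fun j => h j * (h ((permOf hm nElt)⁻¹ j))⁻¹) := by
  obtain ⟨e, _, _, _, he⟩ := permOf_spec hm nElt
  set σ := permOf hm nElt with hσ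
  have he0 : ∀ j, e j ≠ 0 := unit_d_ne_zero he
  have hinv1 : (((hElt⁻¹ : ↥(G0 p m κ)) : Matrix.GeneralLinearGroup (Fin κ) (ZMod p)) :
      Matrix (Fin κ) (Fin κ) (ZMod p)) = mmat κ p 1 (fun j => (h j)⁻¹) := by
    have := inv_val_eq hd hval
    simpa using this
  have hinv2 : (((nElt⁻¹ : ↥(G0 p m κ)) : Matrix.GeneralLinearGroup (Fin κ) (ZMod p)) :
      Matrix (Fin κ) (Fin κ) (ZMod p)) = mmat κ p σ⁻¹ (fun j => (e (σ⁻¹ j))⁻¹) := by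
    have := inv_val_eq he0 he
    simpa using this
  have hexp : valHom p m κ (hElt * nElt * hElt⁻¹ * nElt⁻¹)
      = mmat κ p 1 h * mmat κ p σ e * mmat κ p 1 (fun j => (h j)⁻¹)
        * mmat κ p σ⁻¹ (fun j => (e (σ⁻¹ j))⁻¹) := by
    rw [_root_.map_mul, _root_.map_mul, _root_.map_mul]
    rw [valHom_apply, valHom_apply, valHom_apply, valHom_apply,
      hval, he, hinv1, hinv2]
  rw [← valHom_apply, hexp, mmat_mul, mmat_mul, mmat_mul]
  have hperm : ((1 : Equiv.Perm (Fin κ)) * σ * 1) * σ⁻¹ = 1 := by group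
  rw [hperm]
  have hfun : (fun j => h (σ ((1 : Equiv.Perm (Fin κ)) (σ⁻¹ j)))
        * e ((1 : Equiv.Perm (Fin κ)) (σ⁻¹ j)) * (h (σ⁻¹ j))⁻¹ * (e (σ⁻¹ j))⁻¹)
      = fun j => h j * (h (σ⁻¹ j))⁻¹ := by
    funext j
    simp only [Equiv.Perm.one_apply, Equiv.Perm.apply_inv_self]
    have hc : h j * e (σ⁻¹ j) * (h (σ⁻¹ j))⁻¹ * (e (σ⁻¹ j))⁻¹
        = h j * (h (σ⁻¹ j))⁻¹ * (e (σ⁻¹ j) * (e (σ⁻¹ j))⁻¹) := by ring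
    rw [hc, mul_inv_cancel₀ (he0 _), mul_one]
  rw [hfun]
end G0X
end E

section F
namespace G0X
variable {p m κ : ℕ} [Fact p.Prime]

lemma cvec_pow {i j : Fin κ} {a : ZMod p} (ha : a ^ m = 1) (l : Fin κ) :
    cvec p κ i j a l ^ m = 1 := by
  unfold cvec
  by_cases h1 : l = i
  · rw [if_pos h1]; exact ha
  · rw [if_neg h1]
    by_cases h2 : l = j
    · rw [if_pos h2, inv_pow, ha, inv_one]
    · rw [if_neg h2, one_pow]

lemma cvec_ne {i j : Fin κ} {a : ZMod p} (ha : a ≠ 0) (l : Fin κ) :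
    cvec p κ i j a l ≠ 0 := by
  unfold cvec
  by_cases h1 : l = i
  · rw [if_pos h1]; exact ha
  · rw [if_neg h1]
    by_cases h2 : l = j
    · rw [if_pos h2]; exact inv_ne_zero ha
    · rw [if_neg h2]; exact one_ne_zero

lemma cvec_prod {i j : Fin κ} {a : ZMod p} (hij : i ≠ j) (ha : a ≠ 0) :
    (∏ l, cvec p κ i j a l) = 1 := by
  rw [← Finset.mul_prod_erase Finset.univ _ (Finset.mem_univ i)]
  have hj : j ∈ Finset.univ.erase i := Finset.mem_erase.2 ⟨Ne.symm hij, Finset.mem_univ j⟩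
  rw [← Finset.mul_prod_erase _ _ hj]
  have hrest : ∏ l ∈ (Finset.univ.erase i).erase j, cvec p κ i j a l = 1 := by
    apply Finset.prod_eq_one
    intro l hl
    have hlj : l ≠ j := (Finset.mem_erase.1 hl).1
    have hli : l ≠ i := (Finset.mem_erase.1 (Finset.mem_erase.1 hl).2).1
    unfold cvec
    rw [if_neg hli, if_neg hlj]
  rw [hrest, mul_one]
  unfold cvec
  rw [if_pos rfl, if_neg (Ne.symm hij), if_pos rfl]
  exact mul_inv_cancel₀ ha

lemma exists_not_mem_finset {n : ℕ} (s : Finset (Fin n)) (h : s.card < n) : ∃ t, t ∉ s := by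
  by_contra hc
  push_neg at hc
  have h2 : s = Finset.univ := Finset.eq_univ_iff_forall.2 hc
  rw [h2, Finset.card_univ, Fintype.card_fin] at h
  omega

end G0X
end F

open G0X

/-- Let `p ≥ 5` be a prime, `m` an integer with `2 < m` and `m ∣ p − 1`,
and `κ ≥ p`.  If `N` is a normal subgroup of `G₀(m,m,κ)` whose order is divisible by `p`,
then `N = G₀(m,m,κ)`: i.e. `G₀(m,m,κ)` has no proper normal subgroup of order a multiple
of `p`. -/
theorem G0_no_proper_normal_subgroup_of_order_div_p
    (p m κ : ℕ) (hp : p.Prime) (hp5 : 5 ≤ p)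
    (hm : 2 < m) (hmdvd : m ∣ p - 1) (hκ : p ≤ κ)
    (N : Subgroup ↥(G0 p m κ)) (hN : N.Normal)
    (hdvd : p ∣ Nat.card ↥N) :
    N = ⊤ := by
  haveI : Fact p.Prime := ⟨hp⟩
  haveI : NeZero p := ⟨hp.ne_zero⟩
  have hm0 : m ≠ 0 := by omega
  have hmp : ¬ p ∣ m := by
    intro h
    have h1 : p ≤ m := Nat.le_of_dvd (by omega) h
    have h2 : m ≤ p - 1 := Nat.le_of_dvd (by omega) hmdvd
    omega
  -- Cauchy: an element of order p in N
  obtain ⟨g, hg⟩ := exists_prime_orderOf_dvd_card' (G := ↥N) p hdvd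
  set n : ↥(G0 p m κ) := (g : ↥(G0 p m κ)) with hn
  have hnN : n ∈ N := SetLike.coe_mem g
  have hordn : orderOf n = p :=
    (orderOf_injective N.subtype N.subtype_injective g).trans hg
  have hnp : n ^ p = 1 := by
    have h0 := pow_orderOf_eq_one n
    rwa [hordn] at h0
  -- the projection to the alternating group
  set A := alternatingGroup (Fin κ) with hA
  set πA : ↥(G0 p m κ) →* ↥A :=
    MonoidHom.codRestrict (permHom hm0) A
      (fun g0 => Equiv.Perm.mem_alternatingGroup.2 (permOf_sign hm0 g0)) with hπA
  have hπA_coe : ∀ g0 : ↥(G0 p m κ), ((πA g0 : ↥A) : Equiv.Perm (Fin κ)) = permOf hm0 g0 :=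
    fun _ => rfl
  have hone : ∀ j : Fin κ, (fun _ : Fin κ => (1 : ZMod p)) j ≠ 0 := fun _ => one_ne_zero
  have hsurj : Function.Surjective πA := by
    rintro ⟨σ, hσ⟩
    have hs : Equiv.Perm.sign σ = 1 := Equiv.Perm.mem_alternatingGroup.1 hσ
    refine ⟨⟨gmat σ (fun _ => 1) hone,
      gmat_mem_of hone hs (fun i => one_pow m) Finset.prod_const_one⟩, ?_⟩
    apply Subtype.ext
    exact permOf_eq hm0 rfl
  -- the image of N is everything
  have hHn : (N.map πA).Normal := Subgroup.Normal.map hN πA hsurj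
  have hune : ((πA n : ↥A) : Equiv.Perm (Fin κ)) ≠ 1 := by
    intro h1
    rw [hπA_coe] at h1
    have h2 := pow_m_eq_one_of_permOf_eq_one hm0 h1
    have h3 : orderOf n ∣ m := orderOf_dvd_of_pow_eq_one h2
    rw [hordn] at h3
    exact hmp h3
  have hup : ((πA n : ↥A) : Equiv.Perm (Fin κ)) ^ p = 1 := by
    have h4 : (πA n) ^ p = 1 := by rw [← map_pow, hnp, _root_.map_one]
    calc ((πA n : ↥A) : Equiv.Perm (Fin κ)) ^ p
        = (((πA n) ^ p : ↥A) : Equiv.Perm (Fin κ)) := by push_cast; rfl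
      _ = 1 := by rw [h4]; rfl
  have hcard : 5 ≤ Fintype.card (Fin κ) := by rw [Fintype.card_fin]; omega
  have Htop : N.map πA = ⊤ :=
    conj_eq_top_of_prime_order hp hp5 hcard (N.map πA) hHn (πA n)
      (Subgroup.mem_map_of_mem πA hnN) hune hup
  -- the diagonal generators lie in N
  have hgen : ∀ i j : Fin κ, i ≠ j → ∀ a : ZMod p, a ^ m = 1 →
      ∀ gg : ↥(G0 p m κ),
        ((gg : Matrix.GeneralLinearGroup (Fin κ) (ZMod p)) : Matrix (Fin κ) (Fin κ) (ZMod p))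
          = mmat κ p 1 (cvec p κ i j a) → gg ∈ N := by
    intro i j hij a ham gg hggval
    have ha0 : a ≠ 0 := by
      intro h0
      rw [h0, zero_pow hm0] at ham
      exact one_ne_zero ham.symm
    -- pick auxiliary indices k, x
    obtain ⟨k, hk⟩ := exists_not_mem_finset ({i, j} : Finset (Fin κ))
      (lt_of_le_of_lt (Finset.card_insert_le i {j}) (by rw [Finset.card_singleton]; omega))
    obtain ⟨x, hx⟩ := exists_not_mem_finset ({i, j, k} : Finset (Fin κ))
      (lt_of_le_of_lt (le_trans (Finset.card_insert_le _ _)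
        (by exact Nat.succ_le_succ (Finset.card_insert_le _ _))) (by rw [Finset.card_singleton]; omega))
    have hki : k ≠ i := fun h => hk (by rw [h]; exact Finset.mem_insert_self i {j})
    have hkj : k ≠ j := fun h => hk (by rw [h]; exact Finset.mem_insert_of_mem (Finset.mem_singleton_self j))
    have hxi : x ≠ i := fun h => hx (by rw [h]; simp)
    have hxj : x ≠ j := fun h => hx (by rw [h]; simp)
    have hxk : x ≠ k := fun h => hx (by rw [h]; simp)
    -- the 3-cycle
    set ζ : Equiv.Perm (Fin κ) := Equiv.swap j k * Equiv.swap j i with hζ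
    have hζj : ζ j = i := by
      rw [hζ, Equiv.Perm.mul_apply, Equiv.swap_apply_left,
        Equiv.swap_apply_of_ne_of_ne hij (Ne.symm hki)]
    have hζi : ζ i = k := by
      rw [hζ, Equiv.Perm.mul_apply, Equiv.swap_apply_right, Equiv.swap_apply_left]
    have hζk : ζ k = j := by
      rw [hζ, Equiv.Perm.mul_apply,
        Equiv.swap_apply_of_ne_of_ne hkj hki, Equiv.swap_apply_right]
    have hζother : ∀ l, l ≠ i → l ≠ j → l ≠ k → ζ l = l := by
      intro l h1 h2 h3
      rw [hζ, Equiv.Perm.mul_apply, Equiv.swap_apply_of_ne_of_ne h2 h1,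
        Equiv.swap_apply_of_ne_of_ne h2 h3]
    have hζsign : Equiv.Perm.sign ζ⁻¹ = 1 := by
      rw [map_inv, hζ, _root_.map_mul, Equiv.Perm.sign_swap (Ne.symm hkj),
        Equiv.Perm.sign_swap (Ne.symm hij)]
      decide
    -- get an element of N projecting to ζ⁻¹
    have hmem3 : (⟨ζ⁻¹, Equiv.Perm.mem_alternatingGroup.2 hζsign⟩ : ↥A) ∈ N.map πA := by
      rw [Htop]; trivial
    obtain ⟨nn, hnnN, hnnval⟩ := hmem3
    have hperm_nn : permOf hm0 nn = ζ⁻¹ := congrArg Subtype.val hnnval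
    -- the diagonal conjugating element
    set h : Fin κ → ZMod p := cvec p κ i x a with hh
    have hd : ∀ l, h l ≠ 0 := cvec_ne ha0
    set hElt : ↥(G0 p m κ) := ⟨gmat 1 h hd,
      gmat_mem_of hd (by simp) (cvec_pow ham) (cvec_prod (Ne.symm hxi) ha0)⟩ with hhElt
    set c : ↥(G0 p m κ) := hElt * nn * hElt⁻¹ * nn⁻¹ with hc
    have hcN : c ∈ N := mul_mem (hN.conj_mem nn hnnN hElt) (inv_mem hnnN)
    have hcval := comm_val hm0 nn hd hElt rfl
    rw [hperm_nn, inv_inv] at hcval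
    have hhi : h i = a := by rw [hh]; unfold cvec; rw [if_pos rfl]
    have hhx : h x = a⁻¹ := by rw [hh]; unfold cvec; rw [if_neg hxi, if_pos rfl]
    have hhother : ∀ l, l ≠ i → l ≠ x → h l = 1 := by
      intro l h1 h2
      rw [hh]; unfold cvec; rw [if_neg h1, if_neg h2]
    have hti : cvec p κ i j a i = a := by unfold cvec; rw [if_pos rfl]
    have htj : cvec p κ i j a j = a⁻¹ := by
      unfold cvec; rw [if_neg (Ne.symm hij), if_pos rfl]
    have htother : ∀ l, l ≠ i → l ≠ j → cvec p κ i j a l = 1 := by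
      intro l h1 h2
      unfold cvec; rw [if_neg h1, if_neg h2]
    have hfun : (fun l => h l * (h (ζ l))⁻¹) = cvec p κ i j a := by
      funext l
      by_cases h1 : l = i
      · rw [h1, hζi, hhi, hhother k hki (Ne.symm hxk), inv_one, mul_one, hti]
      · by_cases h2 : l = j
        · rw [h2, hζj, hhother j (Ne.symm hij) (Ne.symm hxj), hhi, one_mul, htj]
        · by_cases h3 : l = k
          · rw [h3, hζk, hhother k hki (Ne.symm hxk),
              hhother j (Ne.symm hij) (Ne.symm hxj), inv_one, mul_one,
              htother k hki hkj]
          · by_cases h4 : l = x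
            · rw [h4, hζother x hxi hxj hxk, hhx, htother x hxi hxj]
              exact mul_inv_cancel₀ (inv_ne_zero ha0)
            · rw [hζother l h1 h2 h3, hhother l h1 h4, inv_one, mul_one,
                htother l h1 h2]
    rw [hfun] at hcval
    have : gg = c := Subtype.ext (Units.ext (hggval.trans hcval.symm))
    rw [this]
    exact hcN
  -- every element of the kernel of the projection lies in N
  have i₀ : Fin κ := ⟨0, by omega⟩
  have hstep : ∀ s : Finset (Fin κ), ∀ d : Fin κ → ZMod p, (∀ i, d i ^ m = 1) →
      (∀ l, d l ≠ 0) → (∏ i, d i) = 1 → (∀ l, l ∉ s → l ≠ i₀ → d l = 1) →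
      ∀ gg : ↥(G0 p m κ),
        ((gg : Matrix.GeneralLinearGroup (Fin κ) (ZMod p)) : Matrix (Fin κ) (Fin κ) (ZMod p))
          = mmat κ p 1 d → gg ∈ N := by
    intro s
    induction s using Finset.induction_on with
    | empty =>
      intro d hdp hd0 hdprod hsupp gg hval
      have hdi₀ : d i₀ = 1 := by
        have h1 : ∏ i ∈ Finset.univ.erase i₀, d i = 1 :=
          Finset.prod_eq_one (fun l hl =>
            hsupp l (Finset.notMem_empty l) (Finset.mem_erase.1 hl).1)
        have h2 : d i₀ * ∏ i ∈ Finset.univ.erase i₀, d i = 1 := by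
          rw [Finset.mul_prod_erase Finset.univ d (Finset.mem_univ i₀)]
          exact hdprod
        rw [h1, mul_one] at h2
        exact h2
      have hd1 : d = 1 := by
        funext l
        by_cases hl : l = i₀
        · rw [hl]; exact hdi₀
        · exact hsupp l (Finset.notMem_empty l) hl
      have : gg = 1 := by
        apply Subtype.ext
        apply Units.ext
        rw [hval, hd1, mmat_one]
        rfl
      rw [this]
      exact one_mem N
    | @insert a s' hanotin ih =>
      intro d hdp hd0 hdprod hsupp gg hval
      by_cases hcase : a = i₀ ∨ d a = 1
      · -- support already within s' ∪ {i₀}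
        apply ih d hdp hd0 hdprod _ gg hval
        intro l hls hli
        by_cases hla : l = a
        · rcases hcase with h | h
          · exact absurd (hla.trans h) hli
          · rw [hla]; exact h
        · exact hsupp l (by
            intro hmem
            rcases Finset.mem_insert.1 hmem with h | h
            · exact hla h
            · exact hls h) hli
      · push_neg at hcase
        obtain ⟨hai₀, hda⟩ := hcase
        set e : Fin κ → ZMod p := cvec p κ a i₀ (d a) with he
        have he0 : ∀ l, e l ≠ 0 := cvec_ne (hd0 a)
        have uEltN : (⟨gmat 1 e he0,
            gmat_mem_of he0 (by simp) (cvec_pow (hdp a)) (cvec_prod hai₀ (hd0 a))⟩ :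
              ↥(G0 p m κ)) ∈ N :=
          hgen a i₀ hai₀ (d a) (hdp a) _ rfl
        set uElt : ↥(G0 p m κ) := ⟨gmat 1 e he0,
          gmat_mem_of he0 (by simp) (cvec_pow (hdp a)) (cvec_prod hai₀ (hd0 a))⟩ with hu
        set e' : Fin κ → ZMod p := fun l => (e l)⁻¹ * d l with he'
        have hιval : ((uElt⁻¹ : ↥(G0 p m κ)) : Matrix.GeneralLinearGroup (Fin κ) (ZMod p)) =
            ((uElt : Matrix.GeneralLinearGroup (Fin κ) (ZMod p))⁻¹) := rfl
        have huval : ((uElt : Matrix.GeneralLinearGroup (Fin κ) (ZMod p)) :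
            Matrix (Fin κ) (Fin κ) (ZMod p)) = mmat κ p 1 e := rfl
        have hinve : (((uElt⁻¹ : ↥(G0 p m κ)) : Matrix.GeneralLinearGroup (Fin κ) (ZMod p)) :
            Matrix (Fin κ) (Fin κ) (ZMod p)) = mmat κ p 1 (fun l => (e l)⁻¹) := by
          have h0 := inv_val_eq he0 huval
          simpa using h0
        have hval2 : (((uElt⁻¹ * gg : ↥(G0 p m κ)) :
            Matrix.GeneralLinearGroup (Fin κ) (ZMod p)) : Matrix (Fin κ) (Fin κ) (ZMod p))
            = mmat κ p 1 e' := by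
          rw [← valHom_apply, _root_.map_mul, valHom_apply, valHom_apply, hinve, hval,
            mmat_mul]
          rw [he']
          norm_num
        have hin2 : uElt⁻¹ * gg ∈ N := by
          apply ih e' _ _ _ _ _ hval2
          · intro i
            rw [he']
            show ((e i)⁻¹ * d i) ^ m = 1
            rw [mul_pow, inv_pow, cvec_pow (hdp a) i, inv_one, one_mul]
            exact hdp i
          · intro l
            rw [he']
            exact mul_ne_zero (inv_ne_zero (he0 l)) (hd0 l)
          · rw [he']
            rw [Finset.prod_mul_distrib]
            have h5 : (∏ i, (e i)⁻¹) = (∏ i, e i)⁻¹ := by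
              rw [Finset.prod_inv_distrib]
            rw [h5, he, cvec_prod hai₀ (hd0 a), inv_one, one_mul]
            exact hdprod
          · intro l hls hli
            rw [he']
            by_cases hla : l = a
            · rw [hla]
              show (e a)⁻¹ * d a = 1
              have : e a = d a := by rw [he]; unfold cvec; rw [if_pos rfl]
              rw [this]
              exact inv_mul_cancel₀ (hd0 a)
            · have h6 : e l = 1 := by
                rw [he]; unfold cvec; rw [if_neg hla, if_neg hli]
              have h7 : d l = 1 :=
                hsupp l (by
                  intro hmem
                  rcases Finset.mem_insert.1 hmem with h | h
                  · exact hla h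
                  · exact hls h) hli
              show (e l)⁻¹ * d l = 1
              rw [h6, h7, inv_one, one_mul]
        have : gg = uElt * (uElt⁻¹ * gg) := by group
        rw [this]
        exact mul_mem uEltN hin2
  have hker : ∀ gg : ↥(G0 p m κ), permOf hm0 gg = 1 → gg ∈ N := by
    intro gg hperm1
    obtain ⟨d, _, hdp, hdprod, hdval⟩ := permOf_spec hm0 gg
    rw [hperm1] at hdval
    exact hstep Finset.univ d hdp (unit_d_ne_zero hdval) hdprod
      (fun l hl _ => absurd (Finset.mem_univ l) hl) gg hdval
  -- conclusion
  rw [eq_top_iff]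
  intro gg _
  have hmem : πA gg ∈ N.map πA := by rw [Htop]; trivial
  obtain ⟨nn, hnnN, hnnval⟩ := hmem
  have hperm_eq : permOf hm0 nn = permOf hm0 gg := congrArg Subtype.val hnnval
  have hker1 : permOf hm0 (gg * nn⁻¹) = 1 := by
    have h1 : permHom hm0 (gg * nn⁻¹) = 1 := by
      rw [_root_.map_mul, map_inv, permHom_apply, permHom_apply, hperm_eq]
      exact mul_inv_cancel _
    exact h1
  have h2 : gg * nn⁻¹ ∈ N := hker _ hker1
  have h3 : gg = (gg * nn⁻¹) * nn := by group
  rw [h3]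
  exact mul_mem h2 hnnN
end

section
/- Let p be a prime, let G₁, …, G_k be finite groups, and set G = G₁ × ⋯ × G_k. Let P be a p-subgroup of G and for each i let Pᵢ be the image of P under the projection G → Gᵢ. Then P is p-centric in G if and only if Pᵢ is p-centric in Gᵢ for each 1 ≤ i ≤ k and Z(P₁) × ⋯ × Z(P_k) ≤ P. -/
/-!
The centralizer of `P` in `∏ Gᵢ` is the product of the centralizers `Cᵢ` of the projections
`Pᵢ`, so `Z(P) = P ∩ C(P)` lies in `∏ Zᵢ` with `Zᵢ = Pᵢ ∩ Cᵢ = Z(Pᵢ)`, which is a `p`-subgroup of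
`C(P)`. A product of subgroups is a maximal `p`-subgroup of a product of subgroups exactly when
each factor is. Hence if `Z(P)` is Sylow in `C(P)` it must equal `∏ Zᵢ`, which gives both
conditions; conversely `∏ Zᵢ ≤ P` forces `Z(P) = ∏ Zᵢ`.
-/

/-- A `p`-subgroup `P` of a finite group `G` is *`p`-centric* in `G` if its center `Z(P)`
is a Sylow `p`-subgroup of the centralizer `C_G(P)`. -/
def IsPCentric (p : ℕ) {G : Type*} [Group G] (P : Subgroup G) : Prop :=
  ∃ Q : Sylow p ↥(Subgroup.centralizer (P : Set G)),
    (Q : Subgroup ↥(Subgroup.centralizer (P : Set G))) =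
      (P ⊓ Subgroup.centralizer (P : Set G)).subgroupOf
        (Subgroup.centralizer (P : Set G))

open Subgroup

section Sylow

variable {G : Type*} [Group G] {p : ℕ} {K H : Subgroup G}

theorem IsPGroup.subgroupOf_iff (hKH : K ≤ H) : IsPGroup p (K.subgroupOf H) ↔ IsPGroup p K :=
  ⟨fun h => map_subgroupOf_eq_of_le hKH ▸ h.map H.subtype, fun h => h.comap_subtype⟩

theorem Sylow.exists_coe_eq_subgroupOf_iff (hKH : K ≤ H) :
    (∃ Q : Sylow p H, (Q : Subgroup H) = K.subgroupOf H) ↔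
      Maximal (fun L : Subgroup G => IsPGroup p L ∧ L ≤ H) K := by
  constructor
  · rintro ⟨Q, hQ⟩
    refine ⟨⟨(IsPGroup.subgroupOf_iff hKH).mp (hQ ▸ Q.isPGroup'), hKH⟩, ?_⟩
    rintro L ⟨hL, hLH⟩ hKL
    have hLK : L.subgroupOf H = K.subgroupOf H :=
      hQ ▸ Q.is_maximal' ((IsPGroup.subgroupOf_iff hLH).mpr hL) (hQ ▸ subgroupOf_mono H hKL)
    rw [← map_subgroupOf_eq_of_le hLH, hLK, map_subgroupOf_eq_of_le hKH]
  · intro hK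
    refine ⟨⟨K.subgroupOf H, (IsPGroup.subgroupOf_iff hKH).mpr hK.prop.1, fun {Q} hQ hKQ => ?_⟩,
      rfl⟩
    have hKQ' : K ≤ Q.map H.subtype := map_subgroupOf_eq_of_le hKH ▸ map_mono hKQ
    refine le_antisymm ?_ hKQ
    rw [← comap_map_eq_self_of_injective H.subtype_injective Q]
    exact comap_mono (hK.le_of_ge ⟨hQ.map H.subtype, map_subtype_le Q⟩ hKQ')

theorem isPCentric_iff_maximal (P : Subgroup G) :
    IsPCentric p P ↔ Maximal (fun L : Subgroup G => IsPGroup p L ∧ L ≤ centralizer (P : Set G))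
      (P ⊓ centralizer (P : Set G)) :=
  Sylow.exists_coe_eq_subgroupOf_iff inf_le_right

end Sylow

section Pi

variable {ι : Type*} {G : ι → Type*} [∀ i, Group (G i)]

theorem Subgroup.pi_mono {H K : ∀ i, Subgroup (G i)} (h : ∀ i, H i ≤ K i) :
    pi Set.univ H ≤ pi Set.univ K :=
  fun _ hx i hi => h i (hx i hi)

theorem Subgroup.map_evalMonoidHom_pi (H : ∀ i, Subgroup (G i)) (i : ι) :
    (pi Set.univ H).map (Pi.evalMonoidHom G i) = H i := by
  classical
  refine le_antisymm ?_ fun x hx => ⟨Pi.mulSingle i x, ?_, Pi.mulSingle_eq_same i x⟩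
  · rintro _ ⟨y, hy, rfl⟩
    exact hy i (Set.mem_univ i)
  · exact (mulSingle_mem_pi i x).mpr fun _ => hx

theorem Subgroup.pi_le_pi_iff {H K : ∀ i, Subgroup (G i)} :
    pi Set.univ H ≤ pi Set.univ K ↔ ∀ i, H i ≤ K i :=
  ⟨fun h i => map_evalMonoidHom_pi H i ▸ map_evalMonoidHom_pi K i ▸ map_mono h, pi_mono⟩

theorem Subgroup.le_pi_map_evalMonoidHom (L : Subgroup (∀ i, G i)) :
    L ≤ pi Set.univ fun i => L.map (Pi.evalMonoidHom G i) :=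
  le_pi_iff.mpr fun _ _ => map_le_iff_le_comap.mp le_rfl

theorem Subgroup.centralizer_eq_pi_map (P : Subgroup (∀ i, G i)) :
    centralizer (P : Set (∀ i, G i)) =
      pi Set.univ fun i => centralizer (P.map (Pi.evalMonoidHom G i) : Set (G i)) := by
  ext g
  refine ⟨fun hg i _ => ?_, fun hg => mem_centralizer_iff.mpr fun x hx => funext fun i => ?_⟩
  · rintro _ ⟨x, hx, rfl⟩
    exact congrFun (mem_centralizer_iff.mp hg x hx) i
  · exact mem_centralizer_iff.mp (hg i (Set.mem_univ i)) (x i) ⟨x, hx, rfl⟩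

variable {p : ℕ}

theorem IsPGroup.pi [Finite ι] {H : ∀ i, Subgroup (G i)} (hH : ∀ i, IsPGroup p (H i)) :
    IsPGroup p (pi Set.univ H) := by
  rintro ⟨g, hg⟩
  choose n hn using fun i => hH i ⟨g i, hg i (Set.mem_univ i)⟩
  obtain ⟨N, hN⟩ := Finite.exists_le n
  refine ⟨N, Subtype.ext (funext fun i => ?_)⟩
  obtain ⟨c, hc⟩ := pow_dvd_pow p (hN i)
  have hgi : g i ^ p ^ n i = 1 := by simpa using congrArg Subtype.val (hn i)
  simp [hc, pow_mul, hgi]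

theorem isPGroup_pi_iff [Finite ι] {H : ∀ i, Subgroup (G i)} :
    IsPGroup p (pi Set.univ H) ↔ ∀ i, IsPGroup p (H i) :=
  ⟨fun h i => map_evalMonoidHom_pi H i ▸ h.map _, IsPGroup.pi⟩

theorem maximal_isPGroup_le_pi_iff [Finite ι] {Z H : ∀ i, Subgroup (G i)} :
    Maximal (fun L : Subgroup (∀ i, G i) => IsPGroup p L ∧ L ≤ pi Set.univ H) (pi Set.univ Z) ↔
      ∀ i, Maximal (fun L : Subgroup (G i) => IsPGroup p L ∧ L ≤ H i) (Z i) := by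
  classical
  constructor
  · intro hZ i
    have hZi := hZ.prop
    rw [isPGroup_pi_iff, pi_le_pi_iff] at hZi
    refine ⟨⟨hZi.1 i, hZi.2 i⟩, fun L ⟨hL, hLH⟩ hZL => ?_⟩
    have hupd : pi Set.univ (Function.update Z i L) ≤ pi Set.univ Z := by
      refine hZ.le_of_ge ⟨isPGroup_pi_iff.mpr ?_, pi_le_pi_iff.mpr ?_⟩ (pi_le_pi_iff.mpr ?_)
      · exact (Function.forall_update_iff Z fun _ K => IsPGroup p K).mpr
          ⟨hL, fun j _ => hZi.1 j⟩
      · exact (Function.forall_update_iff Z fun j K => K ≤ H j).mpr ⟨hLH, fun j _ => hZi.2 j⟩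
      · exact (Function.forall_update_iff Z fun j K => Z j ≤ K).mpr ⟨hZL, fun j _ => le_rfl⟩
    simpa using pi_le_pi_iff.mp hupd i
  · intro hZ
    refine ⟨⟨isPGroup_pi_iff.mpr fun i => (hZ i).prop.1, pi_mono fun i => (hZ i).prop.2⟩,
      fun L ⟨hL, hLH⟩ hZL => (le_pi_map_evalMonoidHom L).trans (pi_mono fun i => ?_)⟩
    exact (hZ i).le_of_ge ⟨hL.map _, map_evalMonoidHom_pi H i ▸ map_mono hLH⟩
      (map_evalMonoidHom_pi Z i ▸ map_mono hZL)

end Pi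

theorem isPCentric_pi_iff_general
    (p : ℕ) {k : ℕ} (G : Fin k → Type*)
    [∀ i, Group (G i)]
    (P : Subgroup (∀ i, G i)) (hP : IsPGroup p ↥P) :
    IsPCentric p P ↔
      (∀ i, IsPCentric p (P.map (Pi.evalMonoidHom G i))) ∧
        Subgroup.pi Set.univ
            (fun i => P.map (Pi.evalMonoidHom G i) ⊓
              Subgroup.centralizer ((P.map (Pi.evalMonoidHom G i) : Subgroup (G i)) : Set (G i)))
          ≤ P := by
  set C := fun i => centralizer (P.map (Pi.evalMonoidHom G i) : Set (G i))
  set Z := fun i => P.map (Pi.evalMonoidHom G i) ⊓ C i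
  simp only [isPCentric_iff_maximal]
  rw [centralizer_eq_pi_map, ← maximal_isPGroup_le_pi_iff]
  have hPC : P ⊓ pi Set.univ C ≤ pi Set.univ Z :=
    fun g hg i _ => ⟨⟨g, hg.1, rfl⟩, hg.2 i (Set.mem_univ i)⟩
  have hZC : pi Set.univ Z ≤ pi Set.univ C := pi_mono fun _ => inf_le_right
  have hZ : IsPGroup p (pi Set.univ Z) := IsPGroup.pi fun i => (hP.map _).to_inf_left
  constructor
  · intro h
    have heq := h.eq_of_ge ⟨hZ, hZC⟩ hPC
    exact ⟨heq ▸ h, heq ▸ inf_le_left⟩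
  · rintro ⟨h, hZP⟩
    rwa [le_antisymm hPC (le_inf hZP hZC)]

/-- Let `G = G₁ × ⋯ × G_k` be a product of finite groups, `P ≤ G` a
`p`-subgroup, and `Pᵢ` the image of `P` under the projection `G → Gᵢ`.  Then `P` is
`p`-centric in `G` if and only if each `Pᵢ` is `p`-centric in `Gᵢ` and
`Z(P₁) × ⋯ × Z(P_k) ≤ P`. -/
theorem isPCentric_pi_iff
    (p : ℕ) (hp : p.Prime) {k : ℕ} (G : Fin k → Type*)
    [∀ i, Group (G i)] [∀ i, Finite (G i)]
    (P : Subgroup (∀ i, G i)) (hP : IsPGroup p ↥P) :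
    IsPCentric p P ↔
      (∀ i, IsPCentric p (P.map (Pi.evalMonoidHom G i))) ∧
        Subgroup.pi Set.univ
            (fun i => P.map (Pi.evalMonoidHom G i) ⊓
              Subgroup.centralizer ((P.map (Pi.evalMonoidHom G i) : Subgroup (G i)) : Set (G i)))
          ≤ P :=
  isPCentric_pi_iff_general p G P hP
end

section
/- Let p be a prime, let G₁, …, G_k be finite groups, choose a Sylow p-subgroup Sᵢ of Gᵢ for each i, and set G = G₁ × ⋯ × G_k and S = S₁ × ⋯ × S_k (so S is a Sylow p-subgroup of G). Let P ≤ S and for each i let Pᵢ ≤ Sᵢ be the image of P under the projection G → Gᵢ. Then P is fully centralized in the fusion system F_S(G) if and only if, for each 1 ≤ i ≤ k, Pᵢ is fully centralized in the fusion system F_{Sᵢ}(Gᵢ). -/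
open Subgroup

section Aux

variable {k : ℕ} {G : Fin k → Type*} [∀ i, Group (G i)]

/-- Centralizer-intersect-pi decomposes as a pi of centralizers. -/
lemma centralizer_inf_pi (T : ∀ i, Subgroup (G i)) (Q : Subgroup (∀ i, G i)) :
    Subgroup.centralizer (Q : Set (∀ i, G i)) ⊓ Subgroup.pi Set.univ T =
      Subgroup.pi Set.univ
        (fun i => Subgroup.centralizer ((Q.map (Pi.evalMonoidHom G i)) : Set (G i)) ⊓ T i) := by
  ext x
  simp only [Subgroup.mem_inf, Subgroup.mem_pi, Set.mem_univ, forall_true_left,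
    Subgroup.mem_centralizer_iff]
  constructor
  · rintro ⟨hc, hT⟩ i
    refine ⟨?_, hT i⟩
    rintro _ ⟨q, hq, rfl⟩
    have := hc q hq
    exact congrFun this i
  · intro h
    refine ⟨?_, fun i => (h i).2⟩
    intro q hq
    funext i
    exact (h i).1 (q i) ⟨q, hq, rfl⟩

lemma card_pi_subgroup (T : ∀ i, Subgroup (G i)) :
    Nat.card ↥(Subgroup.pi Set.univ T) = ∏ i, Nat.card ↥(T i) := by
  rw [← Nat.card_pi]
  exact Nat.card_congr
    ⟨fun x => fun i => ⟨x.1 i, x.2 i trivial⟩,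
     fun y => ⟨fun i => (y i).1, fun i _ => (y i).2⟩,
     fun x => rfl, fun y => rfl⟩

lemma map_conj_eval (g : ∀ i, G i) (Q : Subgroup (∀ i, G i)) (i : Fin k) :
    (Subgroup.map (MulAut.conj g).toMonoidHom Q).map (Pi.evalMonoidHom G i) =
      Subgroup.map (MulAut.conj (g i)).toMonoidHom (Q.map (Pi.evalMonoidHom G i)) := by
  have hcomm : (Pi.evalMonoidHom G i).comp (MulAut.conj g).toMonoidHom
      = ((MulAut.conj (g i)).toMonoidHom).comp (Pi.evalMonoidHom G i) := by
    ext x; rfl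
  rw [Subgroup.map_map, Subgroup.map_map, hcomm]

end Aux

/-- For a finite group `G` with Sylow `p`-subgroup `S`, a subgroup `Q ≤ S` is
*fully centralized* in the fusion system `F_S(G)` if `|C_S(Q)| ≥ |C_S(gQg⁻¹)|` for every
`g ∈ G` with `gQg⁻¹ ≤ S`. -/
def FullyCentralized {G : Type*} [Group G] (S Q : Subgroup G) : Prop :=
  ∀ g : G, Subgroup.map (MulAut.conj g).toMonoidHom Q ≤ S →
    Nat.card ↥(Subgroup.centralizer
        ((Subgroup.map (MulAut.conj g).toMonoidHom Q : Subgroup G) : Set G) ⊓ S) ≤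
      Nat.card ↥(Subgroup.centralizer (Q : Set G) ⊓ S)

/-- Let `G = G₁ × ⋯ × G_k` be a product of finite groups, with Sylow
`p`-subgroups `Sᵢ ≤ Gᵢ`, and set `S = S₁ × ⋯ × S_k` (a Sylow `p`-subgroup of `G`).  Let
`P ≤ S` and let `Pᵢ ≤ Sᵢ` be the image of `P` under the projection `G → Gᵢ`.  Then `P` is
fully centralized in `F_S(G)` if and only if each `Pᵢ` is fully centralized in
`F_{Sᵢ}(Gᵢ)`. -/
theorem fullyCentralized_pi_iff
    (p : ℕ) (hp : p.Prime) {k : ℕ} (G : Fin k → Type*)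
    [∀ i, Group (G i)] [∀ i, Finite (G i)]
    (S : ∀ i, Sylow p (G i))
    (P : Subgroup (∀ i, G i))
    (hP : P ≤ Subgroup.pi Set.univ fun i => (S i : Subgroup (G i))) :
    FullyCentralized (Subgroup.pi Set.univ fun i => (S i : Subgroup (G i))) P ↔
      ∀ i, FullyCentralized (S i : Subgroup (G i)) (P.map (Pi.evalMonoidHom G i)) := by
  constructor
  · intro h i gi hgi
    -- use g = Pi.mulSingle i gi
    set g : ∀ j, G j := Pi.mulSingle i gi with hg
    have hproj : ∀ j, (Subgroup.map (MulAut.conj g).toMonoidHom P).map (Pi.evalMonoidHom G j) =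
        Subgroup.map (MulAut.conj (g j)).toMonoidHom (P.map (Pi.evalMonoidHom G j)) :=
      fun j => map_conj_eval g P j
    have hPj : ∀ j, P.map (Pi.evalMonoidHom G j) ≤ (S j : Subgroup (G j)) :=
      fun j => Subgroup.map_le_iff_le_comap.mpr ((Subgroup.le_pi_iff.mp hP) j trivial)
    have hprojval : ∀ j, (Subgroup.map (MulAut.conj g).toMonoidHom P).map (Pi.evalMonoidHom G j) =
        if hji : j = i then
          Subgroup.map (MulAut.conj (g j)).toMonoidHom (P.map (Pi.evalMonoidHom G j))
        else P.map (Pi.evalMonoidHom G j) := by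
      intro j
      rw [hproj j]
      split_ifs with hji
      · rfl
      · have h0 : g j = 1 := Pi.mulSingle_eq_of_ne hji gi
        rw [h0]
        have h1 : (MulAut.conj (1 : G j)).toMonoidHom = MonoidHom.id _ := by ext x; simp
        rw [h1, Subgroup.map_id]
    have hle : Subgroup.map (MulAut.conj g).toMonoidHom P ≤
        Subgroup.pi Set.univ fun j => (S j : Subgroup (G j)) := by
      rw [Subgroup.le_pi_iff]
      intro j _
      rw [← Subgroup.map_le_iff_le_comap, hprojval j]
      split_ifs with hji
      · cases hji
        have hgj : g i = gi := Pi.mulSingle_eq_same i gi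
        rw [hgj]
        exact hgi
      · exact hPj j
    have key := h g hle
    rw [centralizer_inf_pi, centralizer_inf_pi, card_pi_subgroup, card_pi_subgroup] at key
    -- components for j ≠ i agree; cancel
    have hfac : ∀ j, j ≠ i →
        Nat.card ↥(Subgroup.centralizer
          (((Subgroup.map (MulAut.conj g).toMonoidHom P).map (Pi.evalMonoidHom G j)) : Set (G j))
            ⊓ (S j : Subgroup (G j))) =
        Nat.card ↥(Subgroup.centralizer ((P.map (Pi.evalMonoidHom G j)) : Set (G j))
            ⊓ (S j : Subgroup (G j))) := by
      intro j hji
      rw [hprojval j]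
      simp [hji]
    -- extract factor at i
    have hi_eq : (Subgroup.map (MulAut.conj g).toMonoidHom P).map (Pi.evalMonoidHom G i) =
        Subgroup.map (MulAut.conj gi).toMonoidHom (P.map (Pi.evalMonoidHom G i)) := by
      rw [hproj i, hg, Pi.mulSingle_eq_same]
    rw [← Finset.mul_prod_erase Finset.univ _ (Finset.mem_univ i),
        ← Finset.mul_prod_erase Finset.univ _ (Finset.mem_univ i)] at key
    have hprod_eq : ∏ j ∈ Finset.univ.erase i,
        Nat.card ↥(Subgroup.centralizer
          (((Subgroup.map (MulAut.conj g).toMonoidHom P).map (Pi.evalMonoidHom G j)) : Set (G j))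
            ⊓ (S j : Subgroup (G j))) =
        ∏ j ∈ Finset.univ.erase i,
        Nat.card ↥(Subgroup.centralizer ((P.map (Pi.evalMonoidHom G j)) : Set (G j))
            ⊓ (S j : Subgroup (G j))) := by
      apply Finset.prod_congr rfl
      intro j hj
      exact hfac j (Finset.ne_of_mem_erase hj)
    rw [hprod_eq] at key
    have hpos : 0 < ∏ j ∈ Finset.univ.erase i,
        Nat.card ↥(Subgroup.centralizer ((P.map (Pi.evalMonoidHom G j)) : Set (G j))
            ⊓ (S j : Subgroup (G j))) := by
      apply Finset.prod_pos
      intro j _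
      exact Nat.card_pos
    rw [hi_eq] at key
    exact Nat.le_of_mul_le_mul_right key hpos
  · intro h g hle
    rw [centralizer_inf_pi, centralizer_inf_pi, card_pi_subgroup, card_pi_subgroup]
    apply Finset.prod_le_prod' -- maybe wrong name
    intro i _
    rw [map_conj_eval g P i]
    exact h i (g i) (by
      have := (Subgroup.le_pi_iff.mp hle) i trivial
      rwa [← Subgroup.map_le_iff_le_comap, map_conj_eval g P i] at this)
end

section
/- Let p be a prime, let G be a finite group, let S be a Sylow p-subgroup of G, and let Q ≤ S. Then Q is fully normalized in the fusion system F_S(G) — that is, |N_S(Q)| ≥ |N_S(gQg⁻¹)| for every g ∈ G with gQg⁻¹ ≤ S — if and only if N_S(Q) is a Sylow p-subgroup of N_G(Q). -/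
/-!
Conjugating by `g` carries `N_P(Q)` onto `N_{gPg⁻¹}(gQg⁻¹)`, and the Sylow subgroups containing
`gQg⁻¹` are the conjugates of those containing `Q`. Hence `Q` is fully normalized exactly when
`|N_S(Q)| ≥ |N_P(Q)|` for every Sylow `P ⊇ Q`. Each `N_P(Q)` is a `p`-subgroup of `N_G(Q)`, and
conversely every `p`-subgroup `L` of `N_G(Q)` lies in some `N_P(Q)`: since `Q` is normal in
`N_G(Q)`, `LQ` is still a `p`-group, and any Sylow `P ⊇ LQ` works. So the condition says that
`N_S(Q)` has maximal order among the `p`-subgroups of `N_G(Q)`, i.e. is Sylow there.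
-/

/-- For a finite group `G` with Sylow `p`-subgroup `S`, a subgroup `Q ≤ S` is
*fully normalized* in the fusion system `F_S(G)` if `|N_S(Q)| ≥ |N_S(gQg⁻¹)|` for every
`g ∈ G` with `gQg⁻¹ ≤ S`. -/
def FullyNormalized {G : Type*} [Group G] (S Q : Subgroup G) : Prop :=
  ∀ g : G, Subgroup.map (MulAut.conj g).toMonoidHom Q ≤ S →
    Nat.card ↥(Subgroup.normalizer ((Subgroup.map (MulAut.conj g).toMonoidHom Q : Subgroup G) : Set G) ⊓ S) ≤
      Nat.card ↥(Subgroup.normalizer (Q : Set G) ⊓ S)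

open Subgroup

namespace Subgroup

variable {G : Type*} [Group G]

theorem card_normalizer_inf_map_conj (g : G) (Q H : Subgroup G) :
    Nat.card ↥(normalizer (map (MulAut.conj g).toMonoidHom Q : Set G) ⊓
        map (MulAut.conj g).toMonoidHom H) =
      Nat.card ↥(normalizer (Q : Set G) ⊓ H) := by
  rw [← map_equiv_normalizer_eq, ← map_inf _ _ _ (MulAut.conj g).injective,
    card_map_of_injective (MulAut.conj g).injective]

theorem card_subgroupOf_of_le {H K : Subgroup G} (hKH : K ≤ H) :
    Nat.card (K.subgroupOf H) = Nat.card K :=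
  Nat.card_congr (subgroupOfEquivOfLe hKH).toEquiv

theorem exists_sylow_subgroupOf_eq_iff {p : ℕ} [Fact p.Prime] [Finite G] {H K : Subgroup G}
    (hKH : K ≤ H) (hK : IsPGroup p K) :
    (∃ R : Sylow p H, (R : Subgroup H) = K.subgroupOf H) ↔
      ∀ L ≤ H, IsPGroup p L → Nat.card L ≤ Nat.card K := by
  constructor
  · rintro ⟨R, hR⟩ L hLH hL
    obtain ⟨R', hLR'⟩ := (hL.of_equiv (subgroupOfEquivOfLe hLH).symm).exists_le_sylow
    calc Nat.card L = Nat.card (L.subgroupOf H) := (card_subgroupOf_of_le hLH).symm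
      _ ≤ Nat.card (R' : Subgroup H) := card_le_of_le hLR'
      _ = Nat.card (R : Subgroup H) := Nat.card_congr (R'.equiv R).toEquiv
      _ = Nat.card K := by rw [hR, card_subgroupOf_of_le hKH]
  · intro h
    obtain ⟨R, hKR⟩ := (hK.of_equiv (subgroupOfEquivOfLe hKH).symm).exists_le_sylow
    refine ⟨R, (eq_of_le_of_card_ge hKR ?_).symm⟩
    calc Nat.card (R : Subgroup H) = Nat.card ((R : Subgroup H).map H.subtype) :=
          (card_subtype H R).symm
      _ ≤ Nat.card K := h _ (map_subtype_le _) (R.isPGroup'.map _)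
      _ = Nat.card (K.subgroupOf H) := (card_subgroupOf_of_le hKH).symm

end Subgroup

theorem fullyNormalized_iff_forall_sylow {p : ℕ} [Fact p.Prime] {G : Type*} [Group G] [Finite G]
    (S : Sylow p G) (Q : Subgroup G) :
    FullyNormalized (S : Subgroup G) Q ↔
      ∀ P : Sylow p G, Q ≤ P →
        Nat.card ↥(normalizer (Q : Set G) ⊓ P) ≤ Nat.card ↥(normalizer (Q : Set G) ⊓ S) := by
  have conj_eq (P : Sylow p G) (g : G) (hg : g • P = S) :
      map (MulAut.conj g).toMonoidHom P = S := by
    rw [← hg]; rfl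
  constructor
  · intro h P hQP
    obtain ⟨g, hg⟩ := MulAction.exists_smul_eq G P S
    rw [← card_normalizer_inf_map_conj g, conj_eq P g hg]
    exact h g (conj_eq P g hg ▸ map_mono hQP)
  · intro h g hgQ
    have hS := conj_eq _ g (smul_inv_smul g S)
    rw [← hS, map_le_map_iff_of_injective (MulAut.conj g).injective] at hgQ
    conv_lhs => rw [← hS, card_normalizer_inf_map_conj]
    exact h _ hgQ

/-- Let `G` be a finite group, `S` a Sylow `p`-subgroup of `G`, and
`Q ≤ S`.  Then `Q` is fully normalized in the fusion system `F_S(G)` if and only if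
`N_S(Q) = N_G(Q) ∩ S` is a Sylow `p`-subgroup of `N_G(Q)`. -/
theorem fullyNormalized_iff_normalizer_sylow
    (p : ℕ) (hp : p.Prime) (G : Type*) [Group G] [Finite G]
    (S : Sylow p G) (Q : Subgroup G) (hQ : Q ≤ S) :
    FullyNormalized (S : Subgroup G) Q ↔
      ∃ R : Sylow p ↥(Subgroup.normalizer (Q : Set G)),
        (R : Subgroup ↥(Subgroup.normalizer (Q : Set G))) =
          (Subgroup.normalizer (Q : Set G) ⊓ (S : Subgroup G)).subgroupOf (Subgroup.normalizer (Q : Set G)) := by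
  have := Fact.mk hp
  rw [fullyNormalized_iff_forall_sylow,
    exists_sylow_subgroupOf_eq_iff inf_le_left (S.isPGroup'.to_le inf_le_right)]
  constructor
  · intro h L hLN hL
    obtain ⟨P, hLQP⟩ := (hL.to_sup_of_normal_right' (S.isPGroup'.to_le hQ) hLN).exists_le_sylow
    calc Nat.card L ≤ Nat.card ↥(L ⊔ Q) := card_le_of_le le_sup_left
      _ ≤ Nat.card ↥(normalizer (Q : Set G) ⊓ P) :=
        card_le_of_le (le_inf (sup_le hLN le_normalizer) hLQP)
      _ ≤ _ := h P (le_sup_right.trans hLQP)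
  · intro h P _
    exact h _ inf_le_left (P.isPGroup'.to_le inf_le_right)
end

section
/- Let p be a prime, let G be a finite group, let S be a Sylow p-subgroup of G, and let Q ≤ S. Then Q is fully centralized in the fusion system F_S(G) — that is, |C_S(Q)| ≥ |C_S(gQg⁻¹)| for every g ∈ G with gQg⁻¹ ≤ S — if and only if C_S(Q) is a Sylow p-subgroup of C_G(Q). -/
open Pointwise

private lemma card_map_conj {G : Type*} [Group G] (g : G) (H : Subgroup G) :
    Nat.card ↥(H.map (MulAut.conj g).toMonoidHom) = Nat.card H :=
  (Nat.card_congr (H.equivMapOfInjective _ (MulAut.conj g).injective).toEquiv).symm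

private lemma card_subgroupOf_of_le {G : Type*} [Group G] {H K : Subgroup G} (h : H ≤ K) :
    Nat.card (H.subgroupOf K) = Nat.card H :=
  Nat.card_congr (Subgroup.subgroupOfEquivOfLe h).toEquiv

private lemma centralizer_map_conj {G : Type*} [Group G] (g : G) (Q : Subgroup G) :
    Subgroup.centralizer ((Q.map (MulAut.conj g).toMonoidHom : Subgroup G) : Set G) =
      (Subgroup.centralizer (Q : Set G)).map (MulAut.conj g).toMonoidHom := by
  ext x
  constructor
  · intro hx
    refine ⟨g⁻¹ * x * g, Subgroup.mem_centralizer_iff.2 fun q hq => ?_, by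
      simp [MulAut.conj_apply, mul_assoc]⟩
    have h1 : (g * q * g⁻¹) * x = x * (g * q * g⁻¹) :=
      Subgroup.mem_centralizer_iff.1 hx _ ⟨q, hq, by simp [MulAut.conj_apply]⟩
    have := congrArg (fun y => g⁻¹ * (y * g)) h1
    simpa [mul_assoc] using this
  · rintro ⟨y, hy, rfl⟩
    refine Subgroup.mem_centralizer_iff.2 ?_
    rintro m ⟨q, hq, rfl⟩
    have h1 : q * y = y * q := Subgroup.mem_centralizer_iff.1 hy q hq
    simp only [MulEquiv.coe_toMonoidHom, MulAut.conj_apply]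
    calc g * q * g⁻¹ * (g * y * g⁻¹) = g * (q * y) * g⁻¹ := by group
      _ = g * (y * q) * g⁻¹ := by rw [h1]
      _ = g * y * g⁻¹ * (g * q * g⁻¹) := by group

theorem fullyCentralized_iff_centralizer_sylow'
    (p : ℕ) (hp : p.Prime) (G : Type*) [Group G] [Finite G]
    (S : Sylow p G) (Q : Subgroup G) (hQ : Q ≤ S) :
    (∀ g : G, Subgroup.map (MulAut.conj g).toMonoidHom Q ≤ S →
    Nat.card ↥(Subgroup.centralizer
        ((Subgroup.map (MulAut.conj g).toMonoidHom Q : Subgroup G) : Set G) ⊓ S) ≤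
      Nat.card ↥(Subgroup.centralizer (Q : Set G) ⊓ S)) ↔
      ∃ R : Sylow p ↥(Subgroup.centralizer (Q : Set G)),
        (R : Subgroup ↥(Subgroup.centralizer (Q : Set G))) =
          (Subgroup.centralizer (Q : Set G) ⊓ (S : Subgroup G)).subgroupOf
            (Subgroup.centralizer (Q : Set G)) := by
  haveI := Fact.mk hp
  set C : Subgroup G := Subgroup.centralizer (Q : Set G) with hC
  have hCS_p : IsPGroup p ((C ⊓ S : Subgroup G)) := S.isPGroup'.to_le inf_le_right
  have hT_p : IsPGroup p ((C ⊓ S).subgroupOf C) :=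
    hCS_p.of_equiv (Subgroup.subgroupOfEquivOfLe inf_le_left).symm
  constructor
  · intro h
    obtain ⟨R, hR⟩ := hT_p.exists_le_sylow
    refine ⟨R, (Subgroup.eq_of_le_of_card_ge hR ?_).symm⟩
    set R' : Subgroup G := (R : Subgroup C).map C.subtype with hR'
    have hR'C : R' ≤ C := Subgroup.map_subtype_le _
    have hR'p : IsPGroup p R' := R.isPGroup'.map _
    have hQp : IsPGroup p Q := S.isPGroup'.to_le hQ
    have hQnorm : Q ≤ Subgroup.normalizer (R' : Set G) := by
      intro q hq
      rw [Subgroup.mem_normalizer_iff]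
      intro r
      constructor
      · intro hr
        have hc : q * r = r * q := (hR'C hr) q hq
        have e : q * r * q⁻¹ = r := by rw [hc]; group
        rwa [e]
      · intro hr
        have hc : q * (q * r * q⁻¹) = (q * r * q⁻¹) * q := (hR'C hr) q hq
        have hc' : q * (q * r * q⁻¹) = q * r := by rw [hc]; group
        have e : q * r * q⁻¹ = r := mul_left_cancel hc'
        rwa [e] at hr
    have hPp : IsPGroup p ((Q ⊔ R' : Subgroup G)) := hQp.to_sup_of_normal_right' hR'p hQnorm
    obtain ⟨T', hT'⟩ := hPp.exists_le_sylow
    obtain ⟨g, hg⟩ := MulAction.exists_smul_eq G T' S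
    have hTS : Subgroup.map (MulAut.conj g).toMonoidHom (T' : Subgroup G) = S := by
      rw [← hg]; rfl
    have hgQ : Subgroup.map (MulAut.conj g).toMonoidHom Q ≤ (S : Subgroup G) :=
      hTS ▸ Subgroup.map_mono (le_sup_left.trans hT')
    have hineq := h g hgQ
    have hR'map : R'.map (MulAut.conj g).toMonoidHom ≤
        Subgroup.centralizer ((Subgroup.map (MulAut.conj g).toMonoidHom Q : Subgroup G) : Set G)
          ⊓ (S : Subgroup G) := by
      refine le_inf ?_ ?_
      · rw [centralizer_map_conj]; exact Subgroup.map_mono hR'C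
      · rw [← hTS]; exact Subgroup.map_mono (le_sup_right.trans hT')
    calc Nat.card (R : Subgroup C)
        = Nat.card R' := Nat.card_congr
          ((R : Subgroup C).equivMapOfInjective _ (Subgroup.subtype_injective C)).toEquiv
      _ = Nat.card (R'.map (MulAut.conj g).toMonoidHom) := (card_map_conj g R').symm
      _ ≤ Nat.card (Subgroup.centralizer
            ((Subgroup.map (MulAut.conj g).toMonoidHom Q : Subgroup G) : Set G)
            ⊓ (S : Subgroup G) : Subgroup G) := Subgroup.card_le_of_le hR'map
      _ ≤ Nat.card (C ⊓ (S : Subgroup G) : Subgroup G) := hineq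
      _ = Nat.card ((C ⊓ (S : Subgroup G)).subgroupOf C) :=
          (card_subgroupOf_of_le inf_le_left).symm
  · rintro ⟨R, hR⟩ g hg
    set D : Subgroup G :=
      Subgroup.centralizer ((Subgroup.map (MulAut.conj g).toMonoidHom Q : Subgroup G) : Set G)
      with hDdef
    have hD : D = C.map (MulAut.conj g).toMonoidHom := centralizer_map_conj g Q
    set P : Subgroup G := (D ⊓ S).map (MulAut.conj g⁻¹).toMonoidHom with hPdef
    have hDC : D.map (MulAut.conj g⁻¹).toMonoidHom = C := by
      rw [hD, Subgroup.map_map]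
      have e : ((MulAut.conj g⁻¹).toMonoidHom).comp (MulAut.conj g).toMonoidHom =
          MonoidHom.id G := by
        ext x; simp [MulAut.conj_apply, mul_assoc]
      rw [e, Subgroup.map_id]
    have hPC : P ≤ C := by
      calc P ≤ D.map (MulAut.conj g⁻¹).toMonoidHom := Subgroup.map_mono inf_le_left
        _ = C := hDC
    have hPp : IsPGroup p P := (S.isPGroup'.to_le inf_le_right).map _
    have hPC_p : IsPGroup p (P.subgroupOf C) :=
      hPp.of_equiv (Subgroup.subgroupOfEquivOfLe hPC).symm
    obtain ⟨R2, hR2⟩ := hPC_p.exists_le_sylow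
    calc Nat.card (D ⊓ (S : Subgroup G) : Subgroup G)
        = Nat.card P := (card_map_conj g⁻¹ _).symm
      _ = Nat.card (P.subgroupOf C) := (card_subgroupOf_of_le hPC).symm
      _ ≤ Nat.card (R2 : Subgroup C) := Subgroup.card_le_of_le hR2
      _ = Nat.card (R : Subgroup C) := by
          rw [Sylow.card_eq_multiplicity, Sylow.card_eq_multiplicity]
      _ = Nat.card ((C ⊓ (S : Subgroup G)).subgroupOf C) := by rw [hR]
      _ = Nat.card (C ⊓ (S : Subgroup G) : Subgroup G) := card_subgroupOf_of_le inf_le_left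

/-- Let `G` be a finite group, `S` a Sylow `p`-subgroup of `G`, and
`Q ≤ S`.  Then `Q` is fully centralized in the fusion system `F_S(G)` if and only if
`C_S(Q) = C_G(Q) ∩ S` is a Sylow `p`-subgroup of `C_G(Q)`. -/
theorem fullyCentralized_iff_centralizer_sylow
    (p : ℕ) (hp : p.Prime) (G : Type*) [Group G] [Finite G]
    (S : Sylow p G) (Q : Subgroup G) (hQ : Q ≤ S) :
    FullyCentralized (S : Subgroup G) Q ↔
      ∃ R : Sylow p ↥(Subgroup.centralizer (Q : Set G)),
        (R : Subgroup ↥(Subgroup.centralizer (Q : Set G))) =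
          (Subgroup.centralizer (Q : Set G) ⊓ (S : Subgroup G)).subgroupOf
            (Subgroup.centralizer (Q : Set G)) := by
  exact fullyCentralized_iff_centralizer_sylow' p hp G S Q hQ
end
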